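/- arXiv:1404.5524 — 6 statements merged into one kernel-verified Lean document; each statement's English description precedes it below -/
import Mathlib

section
/- The stoichiometric matrix Γ of the processive n-site phosphorylation network has rank 2n+1. -/
open Matrix Finset

noncomputable section

/-- The `m`-th (1-based) standard basis vector of `ℝ^(2n+4)`. -/
def E (n : ℕ) (m : ℕ) : Fin (2*n+4) → ℝ := fun j => if (j : ℕ) + 1 = m then 1 else 0

/-- The value of a vector `x ∈ ℝ^(2n+4)` at the (1-based) math index `m`. -/
def X (n : ℕ) (x : Fin (2*n+4) → ℝ) (m : ℕ) : ℝ :=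
  if h : m - 1 < 2*n+4 then x ⟨m - 1, h⟩ else 0

/-- The stoichiometric matrix `Γ` of the processive `n`-site phosphorylation network;
columns are indexed 1-based as in the paper. -/
def Gamma (n : ℕ) : Matrix (Fin (2*n+4)) (Fin (2*n+2)) ℝ :=
  Matrix.of fun r c0 =>
    (let c := (c0 : ℕ) + 1
     if c = 1 then E n 5 - E n 1 - E n 3
     else if c ≤ n then E n (2*(c-1)+5) - E n (2*(c-1)+3)
     else if c = n+1 then E n 1 + E n 4 - E n (2*n+3)
     else if c = n+2 then E n (2*n+4) - E n 2 - E n 4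
     else if c ≤ 2*n+1 then E n (2*n+4-2*(c-(n+2))) - E n (2*n+6-2*(c-(n+2)))
     else E n 2 + E n 3 - E n 6) r

/-- The mass-action reaction rate function `R : ℝ^(2n+4) → ℝ^(2n+2)` of the processive
`n`-site phosphorylation network (coordinates indexed 1-based). -/
def Rvec (n : ℕ) (k l : ℕ → ℝ) (x : Fin (2*n+4) → ℝ) : Fin (2*n+2) → ℝ := fun a0 =>
  let a := (a0 : ℕ) + 1
  if a = 1 then k 1 * X n x 1 * X n x 3 - k 2 * X n x 5
  else if a ≤ n then
    k (2*(a-1)+1) * X n x (2*(a-1)+3) - k (2*(a-1)+2) * X n x (2*(a-1)+5)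
  else if a = n+1 then k (2*n+1) * X n x (2*n+3)
  else if a = n+2 then l (2*n+1) * X n x 2 * X n x 4 - l (2*n) * X n x (2*n+4)
  else if a ≤ 2*n+1 then
    l (2*(n-(a-(n+2)))+1) * X n x (2*(n-(a-(n+2)))+6)
      - l (2*(n-(a-(n+2)))) * X n x (2*(n-(a-(n+2)))+4)
  else l 1 * X n x 6

/-- The column (1-based) of the unique `+1` entry in row `m` (1-based) of `Gamma n`. -/
def Pcol (n m : ℕ) : ℕ :=
  if m = 1 ∨ m = 4 then n+1
  else if m = 2 ∨ m = 3 then 2*n+2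
  else if m % 2 = 1 then (m-3)/2
  else (4*n+8-m)/2

/-- The column (1-based) of the unique `-1` entry in row `m` (1-based) of `Gamma n`. -/
def Ncol (n m : ℕ) : ℕ :=
  if m = 1 ∨ m = 3 then 1
  else if m = 2 ∨ m = 4 then n+2
  else if m % 2 = 1 then (m-1)/2
  else (4*n+10-m)/2

/-- 1-based access to a vector `v ∈ ℝ^(2n+2)`. -/
def Wv (n : ℕ) (v : Fin (2*n+2) → ℝ) (c : ℕ) : ℝ :=
  if h : c - 1 < 2*n+2 then v ⟨c-1, h⟩ else 0

lemma pcol_bounds (n m : ℕ) (hn : 1 ≤ n) (hm1 : 1 ≤ m) (hm2 : m ≤ 2*n+4) :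
    1 ≤ Pcol n m ∧ Pcol n m ≤ 2*n+2 ∧ 1 ≤ Ncol n m ∧ Ncol n m ≤ 2*n+2 ∧
      Pcol n m ≠ Ncol n m := by
  simp only [Pcol, Ncol]
  split_ifs <;> omega

set_option maxHeartbeats 4000000 in
/-- Each row `m` of `Gamma n` has exactly one `+1` (at column `Pcol n m`) and one `-1`
(at column `Ncol n m`), all other entries being `0`. -/
lemma entry_char (n : ℕ) (hn : 1 ≤ n) (r : Fin (2*n+4)) (c0 : Fin (2*n+2)) :
    Gamma n r c0 =
      if ((c0:ℕ)+1 = Pcol n ((r:ℕ)+1)) then (1:ℝ)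
      else if ((c0:ℕ)+1 = Ncol n ((r:ℕ)+1)) then -1 else 0 := by
  have hr := r.isLt
  have hc := c0.isLt
  simp only [Gamma, Matrix.of_apply, Pcol, Ncol]
  split_ifs <;>
    simp only [E, Pi.sub_apply, Pi.add_apply] <;>
    split_ifs <;>
    first | (exfalso; omega) | norm_num

lemma row_eq (n : ℕ) (hn : 1 ≤ n) (v : Fin (2*n+2) → ℝ) (r : Fin (2*n+4)) :
    (Gamma n).mulVec v r = Wv n v (Pcol n ((r:ℕ)+1)) - Wv n v (Ncol n ((r:ℕ)+1)) := by
  have hm1 : 1 ≤ (r:ℕ)+1 := le_add_self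
  have hm2 : (r:ℕ)+1 ≤ 2*n+4 := r.isLt
  obtain ⟨hp1, hp2, hq1, hq2, hpq⟩ := pcol_bounds n ((r:ℕ)+1) hn hm1 hm2
  set p := Pcol n ((r:ℕ)+1) with hp
  set q := Ncol n ((r:ℕ)+1) with hq
  have hap : p - 1 < 2*n+2 := by omega
  have haq : q - 1 < 2*n+2 := by omega
  set a : Fin (2*n+2) := ⟨p-1, hap⟩ with ha
  set b : Fin (2*n+2) := ⟨q-1, haq⟩ with hb
  have hav : (a:ℕ) = p - 1 := rfl
  have hbv : (b:ℕ) = q - 1 := rfl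
  have key : ∀ c0 : Fin (2*n+2),
      Gamma n r c0 * v c0
        = (if c0 = a then v c0 else 0) + (if c0 = b then -v c0 else 0) := by
    intro c0
    rw [entry_char n hn r c0, ← hp, ← hq]
    have h1 : (c0 = a) ↔ ((c0:ℕ)+1 = p) := by rw [Fin.ext_iff, hav]; omega
    have h2 : (c0 = b) ↔ ((c0:ℕ)+1 = q) := by rw [Fin.ext_iff, hbv]; omega
    simp only [h1, h2]
    split_ifs <;> first | (exfalso; omega) | ring
  have hmv : (Gamma n).mulVec v r = ∑ c0 : Fin (2*n+2), Gamma n r c0 * v c0 := rfl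
  rw [hmv, Finset.sum_congr rfl fun c0 _ => key c0, Finset.sum_add_distrib,
    Finset.sum_ite_eq' Finset.univ a v, Finset.sum_ite_eq' Finset.univ b (fun c0 => -v c0)]
  simp only [Finset.mem_univ, if_true]
  rw [Wv, Wv, dif_pos hap, dif_pos haq]
  ring

lemma one_ker (n : ℕ) (hn : 1 ≤ n) :
    (Gamma n).mulVec (fun _ => (1:ℝ)) = 0 := by
  funext r
  rw [row_eq n hn _ r]
  have hm1 : 1 ≤ (r:ℕ)+1 := le_add_self
  have hm2 : (r:ℕ)+1 ≤ 2*n+4 := r.isLt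
  obtain ⟨hp1, hp2, hq1, hq2, hpq⟩ := pcol_bounds n ((r:ℕ)+1) hn hm1 hm2
  rw [Wv, Wv, dif_pos (by omega : Pcol n ((r:ℕ)+1) - 1 < 2*n+2),
    dif_pos (by omega : Ncol n ((r:ℕ)+1) - 1 < 2*n+2)]
  simp

/-- The row index (1-based) whose equation says `v_j = v_{j+1}` (columns 1-based). -/
def Mrow (n j : ℕ) : ℕ := if j ≤ n then 2*j+3 else if j = n+1 then 4 else 4*n+8-2*j

lemma Mrow_spec (n j : ℕ) (hn : 1 ≤ n) (hj1 : 1 ≤ j) (hj2 : j ≤ 2*n+1) :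
    1 ≤ Mrow n j ∧ Mrow n j ≤ 2*n+4 ∧ Pcol n (Mrow n j) = j ∧ Ncol n (Mrow n j) = j+1 := by
  simp only [Mrow, Pcol, Ncol]
  split_ifs <;> omega

lemma ker_const (n : ℕ) (hn : 1 ≤ n) (v : Fin (2*n+2) → ℝ)
    (hv : (Gamma n).mulVec v = 0) (j : ℕ) (h1 : 1 ≤ j) (h2 : j ≤ 2*n+1) :
    Wv n v j = Wv n v (j+1) := by
  obtain ⟨hM1, hM2, hMP, hMN⟩ := Mrow_spec n j hn h1 h2
  have hrlt : Mrow n j - 1 < 2*n+4 := by omega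
  set r : Fin (2*n+4) := ⟨Mrow n j - 1, hrlt⟩ with hr
  have hval : (r:ℕ) + 1 = Mrow n j := by
    have : (r:ℕ) = Mrow n j - 1 := rfl
    omega
  have := congrFun hv r
  rw [row_eq n hn v r, hval, hMP, hMN] at this
  have h0 : (0 : Fin (2*n+4) → ℝ) r = 0 := rfl
  rw [h0] at this
  linarith

/-- The stoichiometric matrix `Γ` of the processive `n`-site phosphorylation network
has rank `2n+1`. -/
theorem gamma_rank (n : ℕ) (hn : 1 ≤ n) : (Gamma n).rank = 2*n+1 := by
  classical
  have hone : (fun _ => (1:ℝ) : Fin (2*n+2) → ℝ) ≠ 0 := by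
    intro h
    have := congrFun h ⟨0, by omega⟩
    simp at this
  have hker : LinearMap.ker (Gamma n).mulVecLin
      = Submodule.span ℝ {(fun _ => (1:ℝ) : Fin (2*n+2) → ℝ)} := by
    apply le_antisymm
    · intro v hv
      rw [LinearMap.mem_ker, Matrix.mulVecLin_apply] at hv
      have hstep : ∀ j : ℕ, 1 ≤ j → j ≤ 2*n+2 → Wv n v j = Wv n v 1 := by
        intro j
        induction j with
        | zero => intro h _; omega
        | succ k ih =>
          intro _ hk
          rcases Nat.eq_or_lt_of_le (show 1 ≤ k + 1 from Nat.le_add_left 1 k) with h | h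
          · rw [← h]
          · have hk1 : 1 ≤ k := by omega
            have := ker_const n hn v hv k hk1 (by omega)
            rw [← this]
            exact ih hk1 (by omega)
      have hveq : v = (Wv n v 1) • (fun _ => (1:ℝ)) := by
        funext i
        have hi : (i:ℕ) + 1 ≤ 2*n+2 := i.isLt
        have := hstep ((i:ℕ)+1) (by omega) hi
        have hwv : Wv n v ((i:ℕ)+1) = v i := by
          rw [Wv]
          have hlt : (i:ℕ) + 1 - 1 < 2*n+2 := by omega
          rw [dif_pos hlt]
          exact congrArg v (Fin.ext (by simp))
        rw [← hwv, this]
        simp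
      rw [hveq]
      exact Submodule.smul_mem _ _ (Submodule.mem_span_singleton_self _)
    · rw [Submodule.span_le, Set.singleton_subset_iff]
      rw [SetLike.mem_coe, LinearMap.mem_ker, Matrix.mulVecLin_apply]
      exact one_ker n hn
  have hrn := LinearMap.finrank_range_add_finrank_ker (Gamma n).mulVecLin
  rw [hker, finrank_span_singleton hone] at hrn
  have hdom : Module.finrank ℝ (Fin (2*n+2) → ℝ) = 2*n+2 := by
    simp [Module.finrank_fintype_fun_eq_card]
  rw [hdom] at hrn
  have : (Gamma n).rank = Module.finrank ℝ (LinearMap.range (Gamma n).mulVecLin) := rfl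
  omega

end
end

section
/- The rows of the conservation matrix 𝒜 are linearly independent, they satisfy 𝒜·Γ = 0, and the kernel of the transpose Γᵗ equals the linear span of the three rows of 𝒜 (so the rows of 𝒜 form a basis of the orthogonal complement of the column space of Γ). -/
open Matrix Finset

noncomputable section

/-- The conservation matrix `𝒜` of the processive `n`-site network: row 1 has ones in
columns 1, 5, 7, …, 2n+3; row 2 has ones in columns 2, 6, 8, …, 2n+4; row 3 has ones in
columns 3, 4, …, 2n+4 (columns indexed 1-based). -/
def Amat (n : ℕ) : Matrix (Fin 3) (Fin (2*n+4)) ℝ :=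
  Matrix.of fun r c =>
    let m := (c : ℕ) + 1
    if (r : ℕ) = 0 then (if m = 1 ∨ (m % 2 = 1 ∧ 5 ≤ m) then (1:ℝ) else 0)
    else if (r : ℕ) = 1 then (if m = 2 ∨ (m % 2 = 0 ∧ 6 ≤ m) then 1 else 0)
    else (if 3 ≤ m then 1 else 0)


/-! ### Auxiliary lemmas -/

lemma X_apply (n : ℕ) (x : Fin (2*n+4) → ℝ) (j : Fin (2*n+4)) :
    X n x ((j:ℕ)+1) = x j := by
  simp [X]

lemma dot_E (n m : ℕ) (h1 : 1 ≤ m) (h2 : m ≤ 2*n+4) (v : Fin (2*n+4) → ℝ) :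
    ∑ r, E n m r * v r = X n v m := by
  have hm : m - 1 < 2*n+4 := by omega
  rw [X, dif_pos hm]
  rw [Finset.sum_eq_single (⟨m-1, hm⟩ : Fin (2*n+4))]
  · simp [E, Nat.sub_add_cancel h1]
  · intro b _ hb
    have hbm : (b:ℕ)+1 ≠ m := by
      intro h
      exact hb (Fin.ext (by simp; omega))
    simp [E, hbm]
  · simp

lemma col1 (n : ℕ) (hn : 1 ≤ n) (c0 : Fin (2*n+2)) (hc : (c0:ℕ) = 0) (v : Fin (2*n+4) → ℝ) :
    ∑ r, Gamma n r c0 * v r = X n v 5 - X n v 1 - X n v 3 := by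
  have hG : ∀ r, Gamma n r c0 = (E n 5 - E n 1 - E n 3) r := by
    intro r
    simp only [Gamma, Matrix.of_apply, hc]
    split_ifs <;> first | rfl | (exfalso; omega)
  simp only [hG, Pi.sub_apply, sub_mul, Finset.sum_sub_distrib]
  rw [dot_E n 5 (by omega) (by omega), dot_E n 1 (by omega) (by omega),
      dot_E n 3 (by omega) (by omega)]

lemma col2 (n : ℕ) (hn : 1 ≤ n) (c0 : Fin (2*n+2)) (i : ℕ) (h1 : 1 ≤ i) (h2 : i ≤ n-1)
    (hc : (c0:ℕ) = i) (v : Fin (2*n+4) → ℝ) :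
    ∑ r, Gamma n r c0 * v r = X n v (2*i+5) - X n v (2*i+3) := by
  have hG : ∀ r, Gamma n r c0 = (E n (2*i+5) - E n (2*i+3)) r := by
    intro r
    simp only [Gamma, Matrix.of_apply, hc]
    split_ifs <;> first | rfl | (exfalso; omega)
  simp only [hG, Pi.sub_apply, sub_mul, Finset.sum_sub_distrib]
  rw [dot_E n _ (by omega) (by omega), dot_E n _ (by omega) (by omega)]

lemma col3 (n : ℕ) (hn : 1 ≤ n) (c0 : Fin (2*n+2)) (hc : (c0:ℕ) = n) (v : Fin (2*n+4) → ℝ) :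
    ∑ r, Gamma n r c0 * v r = X n v 1 + X n v 4 - X n v (2*n+3) := by
  have hG : ∀ r, Gamma n r c0 = (E n 1 + E n 4 - E n (2*n+3)) r := by
    intro r
    simp only [Gamma, Matrix.of_apply, hc]
    split_ifs <;> first | rfl | (exfalso; omega)
  simp only [hG, Pi.sub_apply, Pi.add_apply, sub_mul, add_mul, Finset.sum_sub_distrib,
    Finset.sum_add_distrib]
  rw [dot_E n _ (by omega) (by omega), dot_E n _ (by omega) (by omega),
    dot_E n _ (by omega) (by omega)]

lemma col4 (n : ℕ) (hn : 1 ≤ n) (c0 : Fin (2*n+2)) (hc : (c0:ℕ) = n+1) (v : Fin (2*n+4) → ℝ) :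
    ∑ r, Gamma n r c0 * v r = X n v (2*n+4) - X n v 2 - X n v 4 := by
  have hG : ∀ r, Gamma n r c0 = (E n (2*n+4) - E n 2 - E n 4) r := by
    intro r
    simp only [Gamma, Matrix.of_apply, hc]
    split_ifs <;> first | rfl | (exfalso; omega)
  simp only [hG, Pi.sub_apply, sub_mul, Finset.sum_sub_distrib]
  rw [dot_E n _ (by omega) (by omega), dot_E n _ (by omega) (by omega),
    dot_E n _ (by omega) (by omega)]

lemma col5 (n : ℕ) (hn : 1 ≤ n) (c0 : Fin (2*n+2)) (i : ℕ) (h1 : 1 ≤ i) (h2 : i ≤ n-1)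
    (hc : (c0:ℕ) = n+1+i) (v : Fin (2*n+4) → ℝ) :
    ∑ r, Gamma n r c0 * v r = X n v (2*n+4-2*i) - X n v (2*n+6-2*i) := by
  have hG : ∀ r, Gamma n r c0 = (E n (2*n+4-2*i) - E n (2*n+6-2*i)) r := by
    intro r
    simp only [Gamma, Matrix.of_apply, hc]
    rw [show n+1+i+1-(n+2) = i from by omega]
    split_ifs <;> first | rfl | (exfalso; omega)
  simp only [hG, Pi.sub_apply, sub_mul, Finset.sum_sub_distrib]
  rw [dot_E n _ (by omega) (by omega), dot_E n _ (by omega) (by omega)]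

lemma col6 (n : ℕ) (hn : 1 ≤ n) (c0 : Fin (2*n+2)) (hc : (c0:ℕ) = 2*n+1) (v : Fin (2*n+4) → ℝ) :
    ∑ r, Gamma n r c0 * v r = X n v 2 + X n v 3 - X n v 6 := by
  have hG : ∀ r, Gamma n r c0 = (E n 2 + E n 3 - E n 6) r := by
    intro r
    simp only [Gamma, Matrix.of_apply, hc]
    split_ifs <;> first | rfl | (exfalso; omega)
  simp only [hG, Pi.sub_apply, Pi.add_apply, sub_mul, add_mul, Finset.sum_sub_distrib,
    Finset.sum_add_distrib]
  rw [dot_E n _ (by omega) (by omega), dot_E n _ (by omega) (by omega),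
    dot_E n _ (by omega) (by omega)]

lemma X_A (n : ℕ) (r : Fin 3) (m : ℕ) (h1 : 1 ≤ m) (h2 : m ≤ 2*n+4) :
    X n (Amat n r) m =
      if (r:ℕ) = 0 then (if m = 1 ∨ (m % 2 = 1 ∧ 5 ≤ m) then (1:ℝ) else 0)
      else if (r:ℕ) = 1 then (if m = 2 ∨ (m % 2 = 0 ∧ 6 ≤ m) then 1 else 0)
      else (if 3 ≤ m then 1 else 0) := by
  rw [X, dif_pos (by omega : m - 1 < 2*n+4)]
  simp only [Amat, Matrix.of_apply]
  rw [show m - 1 + 1 = m from by omega]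

lemma X_A0 (n m : ℕ) (h1 : 1 ≤ m) (h2 : m ≤ 2*n+4) :
    X n (Amat n 0) m = if m = 1 ∨ (m % 2 = 1 ∧ 5 ≤ m) then (1:ℝ) else 0 := by
  rw [X_A n 0 m h1 h2]; norm_num

lemma X_A1 (n m : ℕ) (h1 : 1 ≤ m) (h2 : m ≤ 2*n+4) :
    X n (Amat n 1) m = if m = 2 ∨ (m % 2 = 0 ∧ 6 ≤ m) then (1:ℝ) else 0 := by
  rw [X_A n 1 m h1 h2]; norm_num

lemma X_A2 (n m : ℕ) (h1 : 1 ≤ m) (h2 : m ≤ 2*n+4) :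
    X n (Amat n 2) m = if 3 ≤ m then (1:ℝ) else 0 := by
  rw [X_A n 2 m h1 h2]; norm_num

/-- The rows of the conservation matrix `𝒜` are linearly independent, `𝒜 ⬝ Γ = 0`, and the
kernel of `Γᵗ` equals the span of the three rows of `𝒜`. -/
theorem conservation_basis (n : ℕ) (hn : 1 ≤ n) :
    LinearIndependent ℝ (fun r : Fin 3 => (Amat n r : Fin (2*n+4) → ℝ)) ∧
    Amat n * Gamma n = 0 ∧
    LinearMap.ker (Matrix.mulVecLin (Gamma n)ᵀ) =
      Submodule.span ℝ (Set.range fun r : Fin 3 => (Amat n r : Fin (2*n+4) → ℝ)) := by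
  have hAG : Amat n * Gamma n = 0 := by
    ext r c0
    rw [Matrix.mul_apply, Matrix.zero_apply]
    rw [Finset.sum_congr rfl (fun k _ => mul_comm (Amat n r k) (Gamma n k c0))]
    have hc0 : (c0:ℕ) < 2*n+2 := c0.isLt
    rcases (by omega : (c0:ℕ) = 0 ∨ (1 ≤ (c0:ℕ) ∧ (c0:ℕ) ≤ n-1) ∨ (c0:ℕ) = n ∨ (c0:ℕ) = n+1
        ∨ (n+2 ≤ (c0:ℕ) ∧ (c0:ℕ) ≤ 2*n) ∨ (c0:ℕ) = 2*n+1) with h | h | h | h | h | h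
    · rw [col1 n hn c0 h, X_A n r 5 (by omega) (by omega), X_A n r 1 (by omega) (by omega),
        X_A n r 3 (by omega) (by omega)]
      split_ifs <;> first | (exfalso; omega) | (exfalso; simp_all; done) | (norm_num; done)
    · rw [col2 n hn c0 ((c0:ℕ)) h.1 h.2 rfl, X_A n r _ (by omega) (by omega),
        X_A n r _ (by omega) (by omega)]
      split_ifs <;> first | (exfalso; omega) | (exfalso; simp_all; done) | (norm_num; done)
    · rw [col3 n hn c0 h, X_A n r 1 (by omega) (by omega), X_A n r 4 (by omega) (by omega),
        X_A n r _ (by omega) (by omega)]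
      split_ifs <;> first | (exfalso; omega) | (exfalso; simp_all; done) | (norm_num; done)
    · rw [col4 n hn c0 h, X_A n r _ (by omega) (by omega), X_A n r 2 (by omega) (by omega),
        X_A n r 4 (by omega) (by omega)]
      split_ifs <;> first | (exfalso; omega) | (exfalso; simp_all; done) | (norm_num; done)
    · rw [col5 n hn c0 ((c0:ℕ)-(n+1)) (by omega) (by omega) (by omega),
        X_A n r _ (by omega) (by omega), X_A n r _ (by omega) (by omega)]
      split_ifs <;> first | (exfalso; omega) | (exfalso; simp_all; done) | (norm_num; done)
    · rw [col6 n hn c0 h, X_A n r 2 (by omega) (by omega), X_A n r 3 (by omega) (by omega),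
        X_A n r 6 (by omega) (by omega)]
      split_ifs <;> first | (exfalso; omega) | (exfalso; simp_all; done) | (norm_num; done)
  have hLI : LinearIndependent ℝ (fun r : Fin 3 => (Amat n r : Fin (2*n+4) → ℝ)) := by
    rw [Fintype.linearIndependent_iff]
    intro g hg
    have h0 := congrFun hg ⟨0, by omega⟩
    have h1 := congrFun hg ⟨1, by omega⟩
    have h2 := congrFun hg ⟨2, by omega⟩
    simp [Fin.sum_univ_three, Amat] at h0 h1 h2
    intro r
    fin_cases r <;> simp_all
  refine ⟨hLI, hAG, le_antisymm ?_ ?_⟩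
  · intro x hx
    have hker : ∀ c0 : Fin (2*n+2), ∑ k, Gamma n k c0 * x k = 0 := by
      intro c0
      have h := congrFun (LinearMap.mem_ker.mp hx) c0
      simp only [Matrix.mulVecLin_apply, Matrix.mulVec, dotProduct, Matrix.transpose_apply,
        Pi.zero_apply] at h
      exact h
    have h1 : X n x 5 - X n x 1 - X n x 3 = 0 := by
      rw [← col1 n hn ⟨0, by omega⟩ rfl x]; exact hker _
    have h3 : X n x 1 + X n x 4 - X n x (2*n+3) = 0 := by
      rw [← col3 n hn ⟨n, by omega⟩ rfl x]; exact hker _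
    have h4 : X n x (2*n+4) - X n x 2 - X n x 4 = 0 := by
      rw [← col4 n hn ⟨n+1, by omega⟩ rfl x]; exact hker _
    have h6 : X n x 2 + X n x 3 - X n x 6 = 0 := by
      rw [← col6 n hn ⟨2*n+1, by omega⟩ rfl x]; exact hker _
    have hodd : ∀ i, 1 ≤ i → i ≤ n → X n x (2*i+3) = X n x 1 + X n x 3 := by
      intro i hi1
      induction i, hi1 using Nat.le_induction with
      | base => intro _; norm_num; linarith
      | succ i hi ih =>
        intro hin
        have hrel : X n x (2*i+5) - X n x (2*i+3) = 0 := by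
          rw [← col2 n hn ⟨i, by omega⟩ i hi (by omega) rfl x]; exact hker _
        have hih := ih (by omega)
        rw [show 2*(i+1)+3 = 2*i+5 from by ring]
        linarith
    have heven : ∀ i, 1 ≤ i → i ≤ n → X n x (2*i+4) = X n x 2 + X n x 3 := by
      intro i hi1
      induction i, hi1 using Nat.le_induction with
      | base => intro _; norm_num; linarith
      | succ i hi ih =>
        intro hin
        have hrel : X n x (2*n+4-2*(n-i)) - X n x (2*n+6-2*(n-i)) = 0 := by
          rw [← col5 n hn ⟨n+1+(n-i), by omega⟩ (n-i) (by omega) (by omega) rfl x]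
          exact hker _
        rw [show 2*n+4-2*(n-i) = 2*i+4 from by omega,
            show 2*n+6-2*(n-i) = 2*i+6 from by omega] at hrel
        have hih := ih (by omega)
        rw [show 2*(i+1)+4 = 2*i+6 from by ring]
        linarith
    have hoddn := hodd n hn le_rfl
    have h43 : X n x 4 = X n x 3 := by linarith
    have hx_eq : x = X n x 1 • Amat n 0 + X n x 2 • Amat n 1 + X n x 3 • Amat n 2 := by
      funext j
      have hj : (j:ℕ) < 2*n+4 := j.isLt
      rw [Pi.add_apply, Pi.add_apply, Pi.smul_apply, Pi.smul_apply, Pi.smul_apply,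
        smul_eq_mul, smul_eq_mul, smul_eq_mul,
        show x j = X n x ((j:ℕ)+1) from (X_apply n x j).symm,
        show Amat n 0 j = X n (Amat n 0) ((j:ℕ)+1) from (X_apply n _ j).symm,
        show Amat n 1 j = X n (Amat n 1) ((j:ℕ)+1) from (X_apply n _ j).symm,
        show Amat n 2 j = X n (Amat n 2) ((j:ℕ)+1) from (X_apply n _ j).symm,
        X_A0 n _ (by omega) (by omega), X_A1 n _ (by omega) (by omega),
        X_A2 n _ (by omega) (by omega)]
      rcases (by omega : ((j:ℕ)+1 = 1 ∨ (j:ℕ)+1 = 2 ∨ (j:ℕ)+1 = 3 ∨ (j:ℕ)+1 = 4 ∨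
          (5 ≤ (j:ℕ)+1 ∧ ((j:ℕ)+1) % 2 = 1) ∨ (6 ≤ (j:ℕ)+1 ∧ ((j:ℕ)+1) % 2 = 0))) with
        hm | hm | hm | hm | hm | hm
      · rw [hm]; norm_num
      · rw [hm]; norm_num
      · rw [hm]; norm_num
      · rw [hm]; norm_num; linarith
      · obtain ⟨i, hi1, hi2, hieq⟩ : ∃ i, 1 ≤ i ∧ i ≤ n ∧ (j:ℕ)+1 = 2*i+3 :=
          ⟨((j:ℕ)-2)/2, by omega, by omega, by omega⟩
        rw [hieq, if_pos (by omega), if_neg (by omega), if_pos (by omega),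
          hodd i hi1 hi2]
        ring
      · obtain ⟨i, hi1, hi2, hieq⟩ : ∃ i, 1 ≤ i ∧ i ≤ n ∧ (j:ℕ)+1 = 2*i+4 :=
          ⟨((j:ℕ)-3)/2, by omega, by omega, by omega⟩
        rw [hieq, if_neg (by omega), if_pos (by omega), if_pos (by omega),
          heven i hi1 hi2]
        ring
    rw [hx_eq]
    refine Submodule.add_mem _ (Submodule.add_mem _ ?_ ?_) ?_ <;>
      exact Submodule.smul_mem _ _ (Submodule.subset_span ⟨_, rfl⟩)
  · rw [Submodule.span_le]
    rintro _ ⟨r, rfl⟩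
    simp only [SetLike.mem_coe, LinearMap.mem_ker]
    funext c0
    have h := congrFun (congrFun hAG r) c0
    rw [Matrix.mul_apply, Matrix.zero_apply] at h
    simp only [Matrix.mulVecLin_apply, Matrix.mulVec, dotProduct, Matrix.transpose_apply,
      Pi.zero_apply]
    rw [Finset.sum_congr rfl (fun k _ => mul_comm (Gamma n k c0) (Amat n r k))]
    exact h

end
end

section
/- If x* is a steady state of the processive n-site system that is not positive (i.e., some coordinate of x* is zero), then the set Λ = { i : x*ᵢ = 0 } contains the support of at least one of the three rows of the conservation matrix 𝒜; that is, Λ contains {1, 5, 7, 9, …, 2n+3}, or {2, 6, 8, …, 2n+4}, or {3, 4, 5, …, 2n+4}. Consequently, for every x⁰ ∈ ℝ^{2n+4} with all coordinates strictly positive, the stoichiometric compatibility class (x⁰ + column space of Γ) ∩ ℝ^{2n+4}_{≥0} contains no steady state having a zero coordinate. -/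
open Matrix Finset

noncomputable section

lemma sum_if_nat {N : ℕ} (f : Fin N → ℝ) (a : ℕ) (ha : a < N) :
    ∑ c : Fin N, (if (c:ℕ) = a then f c else 0) = f ⟨a, ha⟩ := by
  rw [show (fun c : Fin N => if (c:ℕ) = a then f c else 0)
      = fun c => if c = ⟨a, ha⟩ then f c else 0 from funext fun c => by
    simp [Fin.ext_iff]]
  simp

set_option maxHeartbeats 1000000 in
lemma rowA (n i : ℕ) (hi : i < n) (f : Fin (2*n+2) → ℝ) :
    ∑ c0 : Fin (2*n+2), Gamma n ⟨2*i+4, by omega⟩ c0 * f c0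
      = f ⟨i, by omega⟩ - f ⟨i+1, by omega⟩ := by
  have key : ∀ c0 : Fin (2*n+2), Gamma n ⟨2*i+4, by omega⟩ c0 * f c0 =
      (if (c0:ℕ) = i then f c0 else 0) - (if (c0:ℕ) = i+1 then f c0 else 0) := by
    intro c0
    have hc := c0.isLt
    simp only [Gamma, Matrix.of_apply]
    split_ifs with h1 h2 h3 h4 h5 <;>
      simp only [E, Pi.sub_apply, Pi.add_apply] <;>
      split_ifs
    all_goals first | ring1 | (exfalso; omega)
  rw [Finset.sum_congr rfl fun c0 _ => key c0, Finset.sum_sub_distrib,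
    sum_if_nat f i (by omega), sum_if_nat f (i+1) (by omega)]
lemma rowB (n : ℕ) (hn : 1 ≤ n) (f : Fin (2*n+2) → ℝ) :
    ∑ c0 : Fin (2*n+2), Gamma n ⟨3, by omega⟩ c0 * f c0
      = f ⟨n, by omega⟩ - f ⟨n+1, by omega⟩ := by
  have key : ∀ c0 : Fin (2*n+2), Gamma n ⟨3, by omega⟩ c0 * f c0 =
      (if (c0:ℕ) = n then f c0 else 0) - (if (c0:ℕ) = n+1 then f c0 else 0) := by
    intro c0
    have hc := c0.isLt
    simp only [Gamma, Matrix.of_apply]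
    split_ifs with h1 h2 h3 h4 h5 <;>
      simp only [E, Pi.sub_apply, Pi.add_apply] <;>
      split_ifs
    all_goals first | ring1 | (exfalso; omega)
  rw [Finset.sum_congr rfl fun c0 _ => key c0, Finset.sum_sub_distrib,
    sum_if_nat f n (by omega), sum_if_nat f (n+1) (by omega)]

set_option maxHeartbeats 1000000 in
lemma rowC (n t : ℕ) (ht : t < n) (f : Fin (2*n+2) → ℝ) :
    ∑ c0 : Fin (2*n+2), Gamma n ⟨2*n+3-2*t, by omega⟩ c0 * f c0
      = f ⟨n+1+t, by omega⟩ - f ⟨n+2+t, by omega⟩ := by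
  have key : ∀ c0 : Fin (2*n+2), Gamma n ⟨2*n+3-2*t, by omega⟩ c0 * f c0 =
      (if (c0:ℕ) = n+1+t then f c0 else 0) - (if (c0:ℕ) = n+2+t then f c0 else 0) := by
    intro c0
    have hc := c0.isLt
    simp only [Gamma, Matrix.of_apply]
    split_ifs with h1 h2 h3 h4 h5 <;>
      simp only [E, Pi.sub_apply, Pi.add_apply] <;>
      split_ifs
    all_goals first | ring1 | (exfalso; omega)
  rw [Finset.sum_congr rfl fun c0 _ => key c0, Finset.sum_sub_distrib,
    sum_if_nat f (n+1+t) (by omega), sum_if_nat f (n+2+t) (by omega)]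
lemma sum_A_E (n : ℕ) (r : Fin 3) (a : ℕ) (h1 : 1 ≤ a) (h2 : a ≤ 2*n+4) :
    ∑ i : Fin (2*n+4), Amat n r i * E n a i = Amat n r ⟨a-1, by omega⟩ := by
  have key : ∀ i : Fin (2*n+4), Amat n r i * E n a i
      = if i = ⟨a-1, by omega⟩ then Amat n r i else 0 := by
    intro i; simp only [E]
    by_cases h : (i:ℕ)+1 = a
    · rw [if_pos h, if_pos (Fin.ext (by simp; omega)), mul_one]
    · rw [if_neg h, if_neg (fun hh => h (by rw [hh]; simp; omega)), mul_zero]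
  rw [Finset.sum_congr rfl fun i _ => key i]
  simp

lemma Amat_val (n : ℕ) (r : Fin 3) (v : ℕ) (h : v < 2*n+4) :
    Amat n r ⟨v, h⟩ = if (r:ℕ) = 0 then (if v = 0 ∨ (v % 2 = 0 ∧ 4 ≤ v) then 1 else 0)
      else if (r:ℕ) = 1 then (if v = 1 ∨ (v % 2 = 1 ∧ 5 ≤ v) then 1 else 0)
      else (if 2 ≤ v then 1 else 0) := by
  simp only [Amat, Matrix.of_apply]
  split_ifs <;> first | rfl | (exfalso; omega)

set_option maxHeartbeats 1000000 in
lemma cons (n : ℕ) (hn : 1 ≤ n) (r : Fin 3) (c0 : Fin (2*n+2)) :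
    ∑ i : Fin (2*n+4), Amat n r i * Gamma n i c0 = 0 := by
  have hc := c0.isLt
  by_cases h1 : (c0:ℕ)+1 = 1
  · have hG : ∀ i : Fin (2*n+4), Gamma n i c0 = E n 5 i - E n 1 i - E n 3 i := fun i => by
      simp only [Gamma, Matrix.of_apply]; rw [if_pos h1]; rfl
    have e1 : ∀ i : Fin (2*n+4), Amat n r i * Gamma n i c0
        = Amat n r i * E n 5 i - Amat n r i * E n 1 i - Amat n r i * E n 3 i :=
      fun i => by rw [hG i]; ring
    rw [Finset.sum_congr rfl fun i _ => e1 i, Finset.sum_sub_distrib, Finset.sum_sub_distrib,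
      sum_A_E n r 5 (by omega) (by omega), sum_A_E n r 1 (by omega) (by omega),
      sum_A_E n r 3 (by omega) (by omega), Amat_val, Amat_val, Amat_val]
    fin_cases r <;> (try norm_num) <;> (try split_ifs) <;> (try norm_num) <;> (first | omega | (exfalso; omega))
  by_cases h2 : (c0:ℕ)+1 ≤ n
  · have hG : ∀ i : Fin (2*n+4), Gamma n i c0
        = E n (2*((c0:ℕ)+1-1)+5) i - E n (2*((c0:ℕ)+1-1)+3) i := fun i => by
      simp only [Gamma, Matrix.of_apply]; rw [if_neg h1, if_pos h2]; rfl
    have e1 : ∀ i : Fin (2*n+4), Amat n r i * Gamma n i c0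
        = Amat n r i * E n (2*((c0:ℕ)+1-1)+5) i - Amat n r i * E n (2*((c0:ℕ)+1-1)+3) i :=
      fun i => by rw [hG i]; ring
    rw [Finset.sum_congr rfl fun i _ => e1 i, Finset.sum_sub_distrib,
      sum_A_E n r _ (by omega) (by omega), sum_A_E n r _ (by omega) (by omega),
      Amat_val, Amat_val]
    fin_cases r <;> (try norm_num) <;> (try split_ifs) <;> (try norm_num) <;> (first | omega | (exfalso; omega))
  by_cases h3 : (c0:ℕ)+1 = n+1
  · have hG : ∀ i : Fin (2*n+4), Gamma n i c0
        = E n 1 i + E n 4 i - E n (2*n+3) i := fun i => by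
      simp only [Gamma, Matrix.of_apply]; rw [if_neg h1, if_neg h2, if_pos h3]; rfl
    have e1 : ∀ i : Fin (2*n+4), Amat n r i * Gamma n i c0
        = Amat n r i * E n 1 i + Amat n r i * E n 4 i - Amat n r i * E n (2*n+3) i :=
      fun i => by rw [hG i]; ring
    rw [Finset.sum_congr rfl fun i _ => e1 i, Finset.sum_sub_distrib, Finset.sum_add_distrib,
      sum_A_E n r 1 (by omega) (by omega), sum_A_E n r 4 (by omega) (by omega),
      sum_A_E n r _ (by omega) (by omega), Amat_val, Amat_val, Amat_val]
    fin_cases r <;> (try norm_num) <;> (try split_ifs) <;> (try norm_num) <;> (first | omega | (exfalso; omega))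
  by_cases h4 : (c0:ℕ)+1 = n+2
  · have hG : ∀ i : Fin (2*n+4), Gamma n i c0
        = E n (2*n+4) i - E n 2 i - E n 4 i := fun i => by
      simp only [Gamma, Matrix.of_apply]; rw [if_neg h1, if_neg h2, if_neg h3, if_pos h4]; rfl
    have e1 : ∀ i : Fin (2*n+4), Amat n r i * Gamma n i c0
        = Amat n r i * E n (2*n+4) i - Amat n r i * E n 2 i - Amat n r i * E n 4 i :=
      fun i => by rw [hG i]; ring
    rw [Finset.sum_congr rfl fun i _ => e1 i, Finset.sum_sub_distrib, Finset.sum_sub_distrib,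
      sum_A_E n r _ (by omega) (by omega), sum_A_E n r 2 (by omega) (by omega),
      sum_A_E n r 4 (by omega) (by omega), Amat_val, Amat_val, Amat_val]
    fin_cases r <;> (try norm_num) <;> (try split_ifs) <;> (try norm_num) <;> (first | omega | (exfalso; omega))
  by_cases h5 : (c0:ℕ)+1 ≤ 2*n+1
  · have hG : ∀ i : Fin (2*n+4), Gamma n i c0
        = E n (2*n+4-2*((c0:ℕ)+1-(n+2))) i - E n (2*n+6-2*((c0:ℕ)+1-(n+2))) i := fun i => by
      simp only [Gamma, Matrix.of_apply]
      rw [if_neg h1, if_neg h2, if_neg h3, if_neg h4, if_pos h5]; rfl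
    have e1 : ∀ i : Fin (2*n+4), Amat n r i * Gamma n i c0
        = Amat n r i * E n (2*n+4-2*((c0:ℕ)+1-(n+2))) i
          - Amat n r i * E n (2*n+6-2*((c0:ℕ)+1-(n+2))) i :=
      fun i => by rw [hG i]; ring
    rw [Finset.sum_congr rfl fun i _ => e1 i, Finset.sum_sub_distrib,
      sum_A_E n r _ (by omega) (by omega), sum_A_E n r _ (by omega) (by omega),
      Amat_val, Amat_val]
    fin_cases r <;> (try norm_num) <;> (try split_ifs) <;> (try norm_num) <;> (first | omega | (exfalso; omega))
  · have hG : ∀ i : Fin (2*n+4), Gamma n i c0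
        = E n 2 i + E n 3 i - E n 6 i := fun i => by
      simp only [Gamma, Matrix.of_apply]
      rw [if_neg h1, if_neg h2, if_neg h3, if_neg h4, if_neg h5]; rfl
    have e1 : ∀ i : Fin (2*n+4), Amat n r i * Gamma n i c0
        = Amat n r i * E n 2 i + Amat n r i * E n 3 i - Amat n r i * E n 6 i :=
      fun i => by rw [hG i]; ring
    rw [Finset.sum_congr rfl fun i _ => e1 i, Finset.sum_sub_distrib, Finset.sum_add_distrib,
      sum_A_E n r 2 (by omega) (by omega), sum_A_E n r 3 (by omega) (by omega),
      sum_A_E n r 6 (by omega) (by omega), Amat_val, Amat_val, Amat_val]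
    fin_cases r <;> (try norm_num) <;> (try split_ifs) <;> (try norm_num) <;> (first | omega | (exfalso; omega))
variable {n : ℕ} {k l : ℕ → ℝ} {x : Fin (2*n+4) → ℝ}

lemma Rv0 (hn : 1 ≤ n) : Rvec n k l x ⟨0, by omega⟩
    = k 1 * X n x 1 * X n x 3 - k 2 * X n x 5 := by
  simp only [Rvec]
  split_ifs <;> first | rfl | (exfalso; omega) | norm_num

lemma RvMid (i : ℕ) (h1 : 1 ≤ i) (h2 : i + 1 ≤ n) : Rvec n k l x ⟨i, by omega⟩
    = k (2*i+1) * X n x (2*i+3) - k (2*i+2) * X n x (2*i+5) := by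
  simp only [Rvec]
  split_ifs <;> first | rfl | (exfalso; omega) | norm_num

lemma RvN (hn : 1 ≤ n) : Rvec n k l x ⟨n, by omega⟩ = k (2*n+1) * X n x (2*n+3) := by
  simp only [Rvec]
  split_ifs <;> first | rfl | (exfalso; omega) | norm_num

lemma RvN1 (hn : 1 ≤ n) : Rvec n k l x ⟨n+1, by omega⟩
    = l (2*n+1) * X n x 2 * X n x 4 - l (2*n) * X n x (2*n+4) := by
  simp only [Rvec]
  split_ifs <;> first | rfl | (exfalso; omega) | norm_num

lemma RvPh (i : ℕ) (h1 : 1 ≤ i) (h2 : i + 1 ≤ n) : Rvec n k l x ⟨n+1+i, by omega⟩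
    = l (2*(n-i)+1) * X n x (2*(n-i)+6) - l (2*(n-i)) * X n x (2*(n-i)+4) := by
  simp only [Rvec]
  rw [show n+1+i+1-(n+2) = i from by omega]
  split_ifs <;> first | rfl | (exfalso; omega) | norm_num

lemma RvLast (hn : 1 ≤ n) : Rvec n k l x ⟨2*n+1, by omega⟩ = l 1 * X n x 6 := by
  simp only [Rvec]
  split_ifs <;> first | rfl | (exfalso; omega) | norm_num

lemma X_eq (x : Fin (2*n+4) → ℝ) (i : Fin (2*n+4)) : X n x ((i:ℕ)+1) = x i := by
  simp [X]

lemma X_nonneg (x : Fin (2*n+4) → ℝ) (hx : ∀ i, 0 ≤ x i) (m : ℕ) : 0 ≤ X n x m := by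
  unfold X; split
  · exact hx _
  · exact le_refl 0

lemma pos_factor {a b : ℝ} (ha : 0 < a) (hb : 0 ≤ b) (h : 0 < a * b) : 0 < b := by
  rcases hb.lt_or_eq with h' | h'
  · exact h'
  · exfalso; rw [← h', mul_zero] at h; exact lt_irrefl 0 h

lemma zero_factor {a b : ℝ} (ha : 0 < a) (h : a * b = 0) : b = 0 := by
  rcases mul_eq_zero.mp h with h' | h'
  · exact absurd h' (ne_of_gt ha)
  · exact h'

lemma pos_pair {a b : ℝ} (ha : 0 ≤ a) (hb : 0 ≤ b) (h : 0 < a * b) : 0 < a ∧ 0 < b := by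
  rcases ha.lt_or_eq with h1 | h1
  · exact ⟨h1, pos_factor h1 hb h⟩
  · exfalso; rw [← h1, zero_mul] at h; exact lt_irrefl 0 h

lemma index_cases (n : ℕ) (hn : 1 ≤ n) (m : ℕ) (h1 : 1 ≤ m) (h2 : m ≤ 2*n+4) :
    m = 1 ∨ m = 2 ∨ m = 3 ∨ m = 4 ∨ (∃ i', 1 ≤ i' ∧ i' ≤ n ∧ m = 2*i'+3)
      ∨ (∃ j, 1 ≤ j ∧ j ≤ n ∧ m = 2*j+4) := by
  by_cases h4 : m ≤ 4
  · omega
  · by_cases hp : m % 2 = 1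
    · exact Or.inr (Or.inr (Or.inr (Or.inr (Or.inl
        ⟨(m-3)/2, by omega, by omega, by omega⟩))))
    · exact Or.inr (Or.inr (Or.inr (Or.inr (Or.inr
        ⟨(m-4)/2, by omega, by omega, by omega⟩))))

lemma Amat_row0_ne (i : Fin (2*n+4)) (h : Amat n 0 i ≠ 0) :
    (i:ℕ)+1 = 1 ∨ (((i:ℕ)+1) % 2 = 1 ∧ 5 ≤ (i:ℕ)+1) := by
  by_contra hc
  apply h
  simp only [Amat, Matrix.of_apply]
  rw [if_pos (by norm_num), if_neg hc]

lemma Amat_row1_ne (i : Fin (2*n+4)) (h : Amat n 1 i ≠ 0) :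
    (i:ℕ)+1 = 2 ∨ (((i:ℕ)+1) % 2 = 0 ∧ 6 ≤ (i:ℕ)+1) := by
  by_contra hc
  apply h
  simp only [Amat, Matrix.of_apply]
  rw [if_neg (by norm_num), if_pos (by norm_num), if_neg hc]

lemma Amat_row2_ne (i : Fin (2*n+4)) (h : Amat n 2 i ≠ 0) : 3 ≤ (i:ℕ)+1 := by
  by_contra hc
  apply h
  simp only [Amat, Matrix.of_apply]
  rw [if_neg (by norm_num), if_neg (by norm_num), if_neg hc]

set_option maxHeartbeats 1000000 in
lemma part1 (n : ℕ) (hn : 1 ≤ n) (k l : ℕ → ℝ)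
    (hk : ∀ i, 1 ≤ i → i ≤ 2*n+1 → 0 < k i)
    (hl : ∀ i, 1 ≤ i → i ≤ 2*n+1 → 0 < l i)
    (x : Fin (2*n+4) → ℝ) (hx : ∀ i, 0 ≤ x i)
    (hss : (Gamma n).mulVec (Rvec n k l x) = 0) (hzero : ∃ i, x i = 0) :
    ((∀ i, Amat n 0 i ≠ 0 → x i = 0) ∨ (∀ i, Amat n 1 i ≠ 0 → x i = 0) ∨
      (∀ i, Amat n 2 i ≠ 0 → x i = 0)) := by
  have hXnn : ∀ m, 0 ≤ X n x m := X_nonneg x hx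
  have hrow : ∀ m : Fin (2*n+4), ∑ c0 : Fin (2*n+2), Gamma n m c0 * Rvec n k l x c0 = 0 := by
    intro m
    have := congrFun hss m
    simpa [Matrix.mulVec, dotProduct] using this
  have step : ∀ (c : ℕ) (hcb : c + 1 < 2*n+2),
      Rvec n k l x ⟨c, by omega⟩ = Rvec n k l x ⟨c+1, hcb⟩ := by
    intro c hcb
    rcases lt_trichotomy c n with hcn | hcn | hcn
    · have h := hrow ⟨2*c+4, by omega⟩
      rw [rowA n c hcn] at h
      linarith
    · subst hcn
      have h := hrow ⟨3, by omega⟩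
      rw [rowB c hn] at h
      linarith
    · have ht : c - (n+1) < n := by omega
      have h := hrow ⟨2*n+3-2*(c-(n+1)), by omega⟩
      rw [rowC n (c-(n+1)) ht] at h
      have e1 : (⟨n+1+(c-(n+1)), by omega⟩ : Fin (2*n+2)) = ⟨c, by omega⟩ :=
        Fin.ext (by simp; omega)
      have e2 : (⟨n+2+(c-(n+1)), by omega⟩ : Fin (2*n+2)) = ⟨c+1, by omega⟩ :=
        Fin.ext (by simp; omega)
      rw [e1, e2] at h
      linarith
  have allEq : ∀ m : ℕ, ∀ h : m < 2*n+2, Rvec n k l x ⟨m, h⟩ = Rvec n k l x ⟨0, by omega⟩ := by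
    intro m
    induction m with
    | zero => intro h; rfl
    | succ p ih => intro h; rw [← step p h]; exact ih (by omega)
  have hrall : ∀ (c : ℕ) (h : c < 2*n+2),
      Rvec n k l x ⟨c, h⟩ = Rvec n k l x ⟨n, by omega⟩ :=
    fun c h => (allEq c h).trans (allEq n (by omega)).symm
  have hrhoN : Rvec n k l x ⟨n, by omega⟩ = k (2*n+1) * X n x (2*n+3) := RvN hn
  have hrhonn : 0 ≤ k (2*n+1) * X n x (2*n+3) :=
    mul_nonneg (hk (2*n+1) (by omega) (by omega)).le (hXnn _)
  rcases hrhonn.lt_or_eq with hpos | hzeq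
  · -- positive case: all coordinates positive, contradiction
    exfalso
    obtain ⟨i0, hi0⟩ := hzero
    have pX2n3 : 0 < X n x (2*n+3) :=
      pos_factor (hk (2*n+1) (by omega) (by omega)) (hXnn _) hpos
    have pOdd : ∀ i', 1 ≤ i' → i' ≤ n → 0 < X n x (2*i'+3) := by
      intro i' h1 h2
      rcases eq_or_lt_of_le h2 with h3 | h3
      · subst h3; exact pX2n3
      · have hv := RvMid (k := k) (l := l) (x := x) i' h1 (by omega)
        rw [hrall i' (by omega), hrhoN] at hv
        have hnn : 0 ≤ k (2*i'+2) * X n x (2*i'+5) :=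
          mul_nonneg (hk (2*i'+2) (by omega) (by omega)).le (hXnn _)
        have : 0 < k (2*i'+1) * X n x (2*i'+3) := by linarith
        exact pos_factor (hk (2*i'+1) (by omega) (by omega)) (hXnn _) this
    have pX6 : 0 < X n x 6 := by
      have hv := RvLast (k := k) (l := l) (x := x) hn
      rw [hrall (2*n+1) (by omega), hrhoN] at hv
      exact pos_factor (hl 1 (by omega) (by omega)) (hXnn _) (by linarith)
    have pEven : ∀ j, 1 ≤ j → j ≤ n → 0 < X n x (2*j+4) := by
      intro j h1 h2
      rcases eq_or_lt_of_le h1 with h3 | h3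
      · rw [show 2*j+4 = 6 by omega]; exact pX6
      · have hi1 : 1 ≤ n - j + 1 := by omega
        have hi2 : (n - j + 1) + 1 ≤ n := by omega
        have hv := RvPh (k := k) (l := l) (x := x) (n-j+1) hi1 hi2
        rw [hrall (n+1+(n-j+1)) (by omega), hrhoN] at hv
        rw [show n-(n-j+1) = j-1 by omega] at hv
        have hnn : 0 ≤ l (2*(j-1)) * X n x (2*(j-1)+4) :=
          mul_nonneg (hl (2*(j-1)) (by omega) (by omega)).le (hXnn _)
        have : 0 < l (2*(j-1)+1) * X n x (2*(j-1)+6) := by linarith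
        have := pos_factor (hl (2*(j-1)+1) (by omega) (by omega)) (hXnn _) this
        rwa [show 2*(j-1)+6 = 2*j+4 by omega] at this
    have p13 : 0 < X n x 1 ∧ 0 < X n x 3 := by
      have hv := Rv0 (k := k) (l := l) (x := x) hn
      rw [hrall 0 (by omega), hrhoN] at hv
      have hnn : 0 ≤ k 2 * X n x 5 :=
        mul_nonneg (hk 2 (by omega) (by omega)).le (hXnn _)
      have h' : 0 < k 1 * (X n x 1 * X n x 3) := by rw [← mul_assoc]; linarith
      exact pos_pair (hXnn 1) (hXnn 3)
        (pos_factor (hk 1 (by omega) (by omega)) (mul_nonneg (hXnn 1) (hXnn 3)) h')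
    have p24 : 0 < X n x 2 ∧ 0 < X n x 4 := by
      have hv := RvN1 (k := k) (l := l) (x := x) hn
      rw [hrall (n+1) (by omega), hrhoN] at hv
      have hnn : 0 ≤ l (2*n) * X n x (2*n+4) :=
        mul_nonneg (hl (2*n) (by omega) (by omega)).le (hXnn _)
      have h' : 0 < l (2*n+1) * (X n x 2 * X n x 4) := by rw [← mul_assoc]; linarith
      exact pos_pair (hXnn 2) (hXnn 4)
        (pos_factor (hl (2*n+1) (by omega) (by omega)) (mul_nonneg (hXnn 2) (hXnn 4)) h')
    have posAll : 0 < x i0 := by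
      rw [← X_eq x i0]
      rcases index_cases n hn ((i0:ℕ)+1) (by omega) (by omega) with
        h | h | h | h | ⟨i', h1, h2, h3⟩ | ⟨j, h1, h2, h3⟩
      · rw [h]; exact p13.1
      · rw [h]; exact p24.1
      · rw [h]; exact p13.2
      · rw [h]; exact p24.2
      · rw [h3]; exact pOdd i' h1 h2
      · rw [h3]; exact pEven j h1 h2
    rw [hi0] at posAll
    exact lt_irrefl 0 posAll
  · -- zero case
    have hz2n3 : X n x (2*n+3) = 0 :=
      zero_factor (hk (2*n+1) (by omega) (by omega)) hzeq.symm
    have zOddD : ∀ d, d ≤ n - 1 → X n x (2*(n-d)+3) = 0 := by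
      intro d
      induction d with
      | zero => intro _; rw [show n - 0 = n from rfl]; exact hz2n3
      | succ d ih =>
        intro hd
        have hprev := ih (by omega)
        have h1 : 1 ≤ n - (d+1) := by omega
        have h2 : (n - (d+1)) + 1 ≤ n := by omega
        have hv := RvMid (k := k) (l := l) (x := x) (n-(d+1)) h1 h2
        rw [hrall (n-(d+1)) (by omega), hrhoN, ← hzeq] at hv
        rw [show 2*(n-(d+1))+5 = 2*(n-d)+3 by omega, hprev, mul_zero, sub_zero] at hv
        exact zero_factor (hk (2*(n-(d+1))+1) (by omega) (by omega)) hv.symm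
    have zOdd : ∀ i', 1 ≤ i' → i' ≤ n → X n x (2*i'+3) = 0 := by
      intro i' h1 h2
      have := zOddD (n - i') (by omega)
      rwa [show n - (n - i') = i' by omega] at this
    have hz6 : X n x 6 = 0 := by
      have hv := RvLast (k := k) (l := l) (x := x) hn
      rw [hrall (2*n+1) (by omega), hrhoN, ← hzeq] at hv
      exact zero_factor (hl 1 (by omega) (by omega)) hv.symm
    have zEven : ∀ j, 1 ≤ j → j ≤ n → X n x (2*j+4) = 0 := by
      intro j
      induction j with
      | zero => omega
      | succ j ih =>
        intro _ hj1
        rcases Nat.eq_or_lt_of_le (show 1 ≤ j+1 by omega) with h1 | h1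
        · rw [show 2*(j+1)+4 = 6 by omega]; exact hz6
        · have hprev := ih (by omega) (by omega)
          have hi1 : 1 ≤ n - j := by omega
          have hi2 : (n - j) + 1 ≤ n := by omega
          have hv := RvPh (k := k) (l := l) (x := x) (n-j) hi1 hi2
          rw [hrall (n+1+(n-j)) (by omega), hrhoN, ← hzeq] at hv
          rw [show n-(n-j) = j by omega, hprev, mul_zero, sub_zero] at hv
          have := zero_factor (hl (2*j+1) (by omega) (by omega)) hv.symm
          rwa [show 2*j+6 = 2*(j+1)+4 by omega] at this
    have h13 : X n x 1 = 0 ∨ X n x 3 = 0 := by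
      have hv := Rv0 (k := k) (l := l) (x := x) hn
      rw [hrall 0 (by omega), hrhoN, ← hzeq] at hv
      have h5 : X n x 5 = 0 := by
        have := zOdd 1 (by omega) hn
        rwa [show 2*1+3 = 5 by omega] at this
      rw [h5, mul_zero, sub_zero, mul_assoc] at hv
      exact mul_eq_zero.mp (zero_factor (hk 1 (by omega) (by omega)) hv.symm)
    have h24 : X n x 2 = 0 ∨ X n x 4 = 0 := by
      have hv := RvN1 (k := k) (l := l) (x := x) hn
      rw [hrall (n+1) (by omega), hrhoN, ← hzeq] at hv
      have h2n4 : X n x (2*n+4) = 0 := zEven n hn (le_refl n)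
      rw [h2n4, mul_zero, sub_zero, mul_assoc] at hv
      exact mul_eq_zero.mp (zero_factor (hl (2*n+1) (by omega) (by omega)) hv.symm)
    rcases h13 with hX1 | hX3
    · left
      intro i hA
      rcases Amat_row0_ne i hA with h | ⟨hodd, hge⟩
      · rw [← X_eq x i, h]; exact hX1
      · have hb : (i:ℕ)+1 ≤ 2*n+4 := by omega
        have : (i:ℕ)+1 = 2*(((i:ℕ)+1-3)/2)+3 := by omega
        rw [← X_eq x i, this]
        exact zOdd _ (by omega) (by omega)
    · rcases h24 with hX2 | hX4
      · right; left
        intro i hA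
        rcases Amat_row1_ne i hA with h | ⟨heven, hge⟩
        · rw [← X_eq x i, h]; exact hX2
        · have hb : (i:ℕ)+1 ≤ 2*n+4 := by omega
          have : (i:ℕ)+1 = 2*(((i:ℕ)+1-4)/2)+4 := by omega
          rw [← X_eq x i, this]
          exact zEven _ (by omega) (by omega)
      · right; right
        intro i hA
        have hge := Amat_row2_ne i hA
        rcases index_cases n hn ((i:ℕ)+1) (by omega) (by omega) with
          h | h | h | h | ⟨i', h1, h2, h3⟩ | ⟨j, h1, h2, h3⟩
        · omega
        · omega
        · rw [← X_eq x i, h]; exact hX3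
        · rw [← X_eq x i, h]; exact hX4
        · rw [← X_eq x i, h3]; exact zOdd i' h1 h2
        · rw [← X_eq x i, h3]; exact zEven j h1 h2

lemma Amat_nonneg (r : Fin 3) (i : Fin (2*n+4)) : 0 ≤ Amat n r i := by
  simp only [Amat, Matrix.of_apply]
  split_ifs <;> norm_num

lemma Amat_diag (hn : 1 ≤ n) (r : Fin 3) : Amat n r ⟨(r:ℕ), by omega⟩ = 1 := by
  fin_cases r <;> simp [Amat]

/-- A steady state of the processive `n`-site system with a zero coordinate has zero set
containing the support of a row of the conservation matrix `𝒜`; consequently, no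
stoichiometric compatibility class of a positive point contains a steady state with a
zero coordinate. -/
theorem no_boundary_steady_states (n : ℕ) (hn : 1 ≤ n) (k l : ℕ → ℝ)
    (hk : ∀ i, 1 ≤ i → i ≤ 2*n+1 → 0 < k i)
    (hl : ∀ i, 1 ≤ i → i ≤ 2*n+1 → 0 < l i) :
    (∀ x : Fin (2*n+4) → ℝ, (∀ i, 0 ≤ x i) →
      (Gamma n).mulVec (Rvec n k l x) = 0 → (∃ i, x i = 0) →
      ((∀ i, Amat n 0 i ≠ 0 → x i = 0) ∨ (∀ i, Amat n 1 i ≠ 0 → x i = 0) ∨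
        (∀ i, Amat n 2 i ≠ 0 → x i = 0))) ∧
    (∀ x0 : Fin (2*n+4) → ℝ, (∀ i, 0 < x0 i) →
      ∀ x : Fin (2*n+4) → ℝ, (∀ i, 0 ≤ x i) →
        x - x0 ∈ LinearMap.range (Matrix.mulVecLin (Gamma n)) →
        (Gamma n).mulVec (Rvec n k l x) = 0 → ∀ i, x i ≠ 0) := by
  constructor
  · exact part1 n hn k l hk hl
  · intro x0 hx0 x hx hrange hss i hxi
    obtain ⟨u, hu⟩ := hrange
    -- conservation: sum of A row against x - x0 is zero
    have hsum : ∀ r : Fin 3, ∑ j : Fin (2*n+4), Amat n r j * (x j - x0 j) = 0 := by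
      intro r
      have hxu : ∀ j, x j - x0 j = (Gamma n).mulVec u j := by
        intro j
        have := congrFun hu j
        simpa [Matrix.mulVecLin] using this.symm
      calc ∑ j, Amat n r j * (x j - x0 j)
          = ∑ j, Amat n r j * ∑ c, Gamma n j c * u c := by
            refine Finset.sum_congr rfl fun j _ => ?_
            rw [hxu j]; rfl
        _ = ∑ j, ∑ c, Amat n r j * Gamma n j c * u c := by
            refine Finset.sum_congr rfl fun j _ => ?_
            rw [Finset.mul_sum]
            exact Finset.sum_congr rfl fun c _ => by ring
        _ = ∑ c, ∑ j, Amat n r j * Gamma n j c * u c := Finset.sum_comm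
        _ = ∑ c, (∑ j, Amat n r j * Gamma n j c) * u c := by
            refine Finset.sum_congr rfl fun c _ => ?_
            rw [Finset.sum_mul]
        _ = 0 := by
            refine Finset.sum_eq_zero fun c _ => ?_
            rw [cons n hn r c, zero_mul]
    have hAx : ∀ r : Fin 3, ∑ j : Fin (2*n+4), Amat n r j * x j
        = ∑ j : Fin (2*n+4), Amat n r j * x0 j := by
      intro r
      have := hsum r
      rw [Finset.sum_congr rfl (fun j _ => by ring :
        ∀ j ∈ Finset.univ, Amat n r j * (x j - x0 j) = Amat n r j * x j - Amat n r j * x0 j),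
        Finset.sum_sub_distrib, sub_eq_zero] at this
      exact this
    obtain hrow | hrow | hrow := part1 n hn k l hk hl x hx hss ⟨i, hxi⟩ <;>
    [ (have hr : ∀ j, Amat n 0 j ≠ 0 → x j = 0 := hrow;
       have hA := hAx 0;
       have hL : ∑ j : Fin (2*n+4), Amat n 0 j * x j = 0 :=
         Finset.sum_eq_zero fun j _ => by
           by_cases h : Amat n 0 j = 0
           · rw [h, zero_mul]
           · rw [hr j h, mul_zero];
       have hR : 0 < ∑ j : Fin (2*n+4), Amat n 0 j * x0 j := by
         refine Finset.sum_pos' (fun j _ => mul_nonneg (Amat_nonneg 0 j) (hx0 j).le) ?_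
         refine ⟨⟨0, by omega⟩, Finset.mem_univ _, ?_⟩
         have := Amat_diag (n := n) hn 0
         simp only [Fin.val_zero] at this
         rw [this, one_mul]
         exact hx0 _;
       linarith [hA ▸ hL]);
      (have hr : ∀ j, Amat n 1 j ≠ 0 → x j = 0 := hrow;
       have hA := hAx 1;
       have hL : ∑ j : Fin (2*n+4), Amat n 1 j * x j = 0 :=
         Finset.sum_eq_zero fun j _ => by
           by_cases h : Amat n 1 j = 0
           · rw [h, zero_mul]
           · rw [hr j h, mul_zero];
       have hR : 0 < ∑ j : Fin (2*n+4), Amat n 1 j * x0 j := by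
         refine Finset.sum_pos' (fun j _ => mul_nonneg (Amat_nonneg 1 j) (hx0 j).le) ?_
         refine ⟨⟨1, by omega⟩, Finset.mem_univ _, ?_⟩
         have := Amat_diag (n := n) hn 1
         simp only [Fin.val_one] at this
         rw [this, one_mul]
         exact hx0 _;
       linarith [hA ▸ hL]);
      (have hr : ∀ j, Amat n 2 j ≠ 0 → x j = 0 := hrow;
       have hA := hAx 2;
       have hL : ∑ j : Fin (2*n+4), Amat n 2 j * x j = 0 :=
         Finset.sum_eq_zero fun j _ => by
           by_cases h : Amat n 2 j = 0
           · rw [h, zero_mul]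
           · rw [hr j h, mul_zero];
       have hR : 0 < ∑ j : Fin (2*n+4), Amat n 2 j * x0 j := by
         refine Finset.sum_pos' (fun j _ => mul_nonneg (Amat_nonneg 2 j) (hx0 j).le) ?_
         refine ⟨⟨2, by omega⟩, Finset.mem_univ _, ?_⟩
         have := Amat_diag (n := n) hn 2
         simp only [Fin.val_two] at this
         rw [this, one_mul]
         exact hx0 _;
       linarith [hA ▸ hL])]


end
end

section
/- The matrix Ỹ of the translated processive network has full rank 2n+2; equivalently, the kernel of its transpose Ỹᵗ is {0}. -/
open Matrix Finset

noncomputable section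

/-- The matrix `Ỹ` of the translated processive network (rows indexed 1-based). -/
def Ytilde (n : ℕ) : Matrix (Fin (2*n+2)) (Fin (2*n+4)) ℝ :=
  Matrix.of fun r0 c =>
    (let r := (r0 : ℕ) + 1
     if r = 1 then E n 1 + E n 2 + E n 3
     else if r ≤ n+1 then E n 2 + E n (2*(r-2)+5)
     else if r = n+2 then E n 1 + E n 2 + E n 4
     else E n 1 + E n (2*n+4-2*(r-(n+3)))) c


theorem Ytilde_ker_bot (n : ℕ) (hn : 1 ≤ n) :
    LinearMap.ker (Matrix.mulVecLin (Ytilde n)ᵀ) = ⊥ := by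
  rw [LinearMap.ker_eq_bot']
  intro v hv
  have key : ∀ j : Fin (2*n+4), ∑ i, Ytilde n i j * v i = 0 := by
    intro j
    have h := congrFun hv j
    simp only [Matrix.mulVecLin_apply, Matrix.mulVec, dotProduct,
      Matrix.transpose_apply, Pi.zero_apply] at h
    exact h
  funext r0
  have hrlt : (r0 : ℕ) < 2*n+2 := r0.isLt
  have main : ∀ (j0 : ℕ) (hj : j0 < 2*n+4),
      (∀ i : Fin (2*n+2), Ytilde n i ⟨j0, hj⟩ = if (i:ℕ) = (r0:ℕ) then 1 else 0) →
      v r0 = 0 := by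
    intro j0 hj hcol
    have h := key ⟨j0, hj⟩
    simp only [hcol, ite_mul, one_mul, zero_mul, Fin.val_inj] at h
    simpa [Finset.sum_ite_eq'] using h
  by_cases h0 : (r0:ℕ) = 0
  · refine main 2 (by omega) fun i => ?_
    simp only [Ytilde, Matrix.of_apply, E, Pi.add_apply]
    split_ifs <;> (simp only [Pi.add_apply, E]; split_ifs <;> first | omega | norm_num)
  · by_cases h1 : (r0:ℕ) ≤ n
    · refine main (2*(r0:ℕ)+2) (by omega) fun i => ?_
      simp only [Ytilde, Matrix.of_apply, E, Pi.add_apply]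
      split_ifs <;> (simp only [Pi.add_apply, E]; split_ifs <;> first | omega | norm_num)
    · by_cases h2 : (r0:ℕ) = n+1
      · refine main 3 (by omega) fun i => ?_
        simp only [Ytilde, Matrix.of_apply, E, Pi.add_apply]
        split_ifs <;> (simp only [Pi.add_apply, E]; split_ifs <;> first | omega | norm_num)
      · refine main (4*n+7-2*(r0:ℕ)) (by omega) fun i => ?_
        simp only [Ytilde, Matrix.of_apply, E, Pi.add_apply]
        split_ifs <;> (simp only [Pi.add_apply, E]; split_ifs <;> first | omega | norm_num)

/-- The matrix `Ỹ` of the translated processive network has full rank `2n+2`;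
equivalently, the kernel of its transpose `Ỹᵗ` is trivial. -/
theorem Ytilde_full_rank (n : ℕ) (hn : 1 ≤ n) :
    (Ytilde n).rank = 2*n+2 ∧ LinearMap.ker (Matrix.mulVecLin (Ytilde n)ᵀ) = ⊥ := by
  refine ⟨?_, Ytilde_ker_bot n hn⟩
  rw [← Matrix.rank_transpose, Matrix.rank]
  have h := LinearMap.finrank_range_add_finrank_ker (Matrix.mulVecLin (Ytilde n)ᵀ)
  rw [Ytilde_ker_bot n hn, finrank_bot] at h
  simpa using h

end
end

section
/- For every x ∈ ℝ^{2n+4}, the polynomial identity Γ·R(x) = Ỹᵗ·Ã_κᵗ·Ψ(x) holds; that is, the mass-action system of the processive n-site network coincides with the generalized mass-action system defined by its weakly reversible translation. -/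
open Matrix Finset

noncomputable section

/-- The label of the edge `a → b` (nodes 1-based in `{1, …, 2n+2}`) in the labeled digraph
underlying the translated processive network; `0` if there is no such edge. -/
def lab (n : ℕ) (k l : ℕ → ℝ) (a b : ℕ) : ℝ :=
  if 1 ≤ a ∧ a ≤ n ∧ b = a+1 then k (2*a-1)
  else if 1 ≤ b ∧ b ≤ n ∧ a = b+1 then k (2*b)
  else if a = n+1 ∧ b = n+2 then k (2*n+1)
  else if n+2 ≤ a ∧ a ≤ 2*n+1 ∧ b = a+1 then l (2*(n+1-(a-(n+1)))+1)
  else if n+3 ≤ a ∧ a ≤ 2*n+2 ∧ b+1 = a then l (2*(n+1-(a-(n+2))))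
  else if a = 2*n+2 ∧ b = 1 then l 1
  else 0

/-- The matrix `Ã_κᵗ` of the translated processive network: for `j ≠ i` the `(j,i)` entry
is the label of the edge `i → j` (or `0`), and the `(i,i)` entry is minus the sum of the
labels of all edges leaving node `i`. -/
def Atilde (n : ℕ) (k l : ℕ → ℝ) : Matrix (Fin (2*n+2)) (Fin (2*n+2)) ℝ :=
  Matrix.of fun j i =>
    if j = i then -(∑ b ∈ Finset.range (2*n+3), lab n k l ((i : ℕ)+1) b)
    else lab n k l ((i : ℕ)+1) ((j : ℕ)+1)

/-- The monomial map `Ψ : ℝ^(2n+4) → ℝ^(2n+2)` of the translated processive network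
(coordinates indexed 1-based). -/
def Psi (n : ℕ) (x : Fin (2*n+4) → ℝ) : Fin (2*n+2) → ℝ := fun a0 =>
  let a := (a0 : ℕ) + 1
  if a = 1 then X n x 1 * X n x 3
  else if a ≤ n+1 then X n x (2*a+1)
  else if a = n+2 then X n x 2 * X n x 4
  else X n x (2*n+6-2*(a-(n+2)))

-- 1-based scalar versions (definitionally equal to the Fin versions)
def rN (n : ℕ) (k l : ℕ → ℝ) (x : Fin (2*n+4) → ℝ) (a : ℕ) : ℝ :=
  if a = 1 then k 1 * X n x 1 * X n x 3 - k 2 * X n x 5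
  else if a ≤ n then
    k (2*(a-1)+1) * X n x (2*(a-1)+3) - k (2*(a-1)+2) * X n x (2*(a-1)+5)
  else if a = n+1 then k (2*n+1) * X n x (2*n+3)
  else if a = n+2 then l (2*n+1) * X n x 2 * X n x 4 - l (2*n) * X n x (2*n+4)
  else if a ≤ 2*n+1 then
    l (2*(n-(a-(n+2)))+1) * X n x (2*(n-(a-(n+2)))+6)
      - l (2*(n-(a-(n+2)))) * X n x (2*(n-(a-(n+2)))+4)
  else l 1 * X n x 6

def psiN (n : ℕ) (x : Fin (2*n+4) → ℝ) (a : ℕ) : ℝ :=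
  if a = 1 then X n x 1 * X n x 3
  else if a ≤ n+1 then X n x (2*a+1)
  else if a = n+2 then X n x 2 * X n x 4
  else X n x (2*n+6-2*(a-(n+2)))

def gN (n c0 : ℕ) : Fin (2*n+4) → ℝ :=
  if c0+1 = 1 then E n 5 - E n 1 - E n 3
  else if c0+1 ≤ n then E n (2*(c0+1-1)+5) - E n (2*(c0+1-1)+3)
  else if c0+1 = n+1 then E n 1 + E n 4 - E n (2*n+3)
  else if c0+1 = n+2 then E n (2*n+4) - E n 2 - E n 4
  else if c0+1 ≤ 2*n+1 then E n (2*n+4-2*(c0+1-(n+2))) - E n (2*n+6-2*(c0+1-(n+2)))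
  else E n 2 + E n 3 - E n 6

def yN (n r0 : ℕ) : Fin (2*n+4) → ℝ :=
  if r0+1 = 1 then E n 1 + E n 2 + E n 3
  else if r0+1 ≤ n+1 then E n 2 + E n (2*(r0+1-2)+5)
  else if r0+1 = n+2 then E n 1 + E n 2 + E n 4
  else E n 1 + E n (2*n+4-2*(r0+1-(n+3)))

lemma Rvec_eq (n : ℕ) (k l : ℕ → ℝ) (x : Fin (2*n+4) → ℝ) (a : Fin (2*n+2)) :
    Rvec n k l x a = rN n k l x ((a : ℕ)+1) := rfl

lemma Psi_eq (n : ℕ) (x : Fin (2*n+4) → ℝ) (a : Fin (2*n+2)) :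
    Psi n x a = psiN n x ((a : ℕ)+1) := rfl

lemma Gamma_eq (n : ℕ) (r : Fin (2*n+4)) (c : Fin (2*n+2)) :
    Gamma n r c = gN n (c : ℕ) r := rfl

lemma Ytilde_eq (n : ℕ) (d : Fin (2*n+2)) (r : Fin (2*n+4)) :
    Ytilde n d r = yN n (d : ℕ) r := rfl

-- label evaluation lemmas
section labeval
variable {n : ℕ} {k l : ℕ → ℝ}

lemma lab_fk (a b v : ℕ) (h1 : 1 ≤ a) (h2 : a ≤ n) (hb : b = a+1) (hv : v = 2*a-1) :
    lab n k l a b = k v := by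
  subst hb hv; unfold lab; rw [if_pos ⟨h1, h2, rfl⟩]

lemma lab_bk (a b v : ℕ) (h1 : 1 ≤ b) (h2 : b ≤ n) (ha : a = b+1) (hv : v = 2*b) :
    lab n k l a b = k v := by
  subst ha hv; unfold lab
  rw [if_neg (by omega), if_pos ⟨h1, h2, rfl⟩]

lemma lab_kmid (a b v : ℕ) (ha : a = n+1) (hb : b = n+2) (hv : v = 2*n+1) :
    lab n k l a b = k v := by
  subst ha hb hv; unfold lab
  rw [if_neg (by omega), if_neg (by omega), if_pos ⟨rfl, rfl⟩]

lemma lab_fl (a b v : ℕ) (h1 : n+2 ≤ a) (h2 : a ≤ 2*n+1) (hb : b = a+1)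
    (hv : v = 2*(n+1-(a-(n+1)))+1) : lab n k l a b = l v := by
  subst hb hv; unfold lab
  rw [if_neg (by omega), if_neg (by omega), if_neg (by omega), if_pos ⟨h1, h2, rfl⟩]

lemma lab_bl (a b v : ℕ) (h1 : n+3 ≤ a) (h2 : a ≤ 2*n+2) (hb : b+1 = a)
    (hv : v = 2*(n+1-(a-(n+2)))) : lab n k l a b = l v := by
  subst hv; unfold lab
  rw [if_neg (by omega), if_neg (by omega), if_neg (by omega), if_neg (by omega),
    if_pos ⟨h1, h2, hb⟩]

lemma lab_last (hn : 1 ≤ n) (a b : ℕ) (ha : a = 2*n+2) (hb : b = 1) :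
    lab n k l a b = l 1 := by
  subst ha hb; unfold lab
  rw [if_neg (by omega), if_neg (by omega), if_neg (by omega), if_neg (by omega),
    if_neg (by omega), if_pos ⟨rfl, rfl⟩]

lemma lab_zero (a b : ℕ) (h1 : b ≠ a+1) (h2 : a ≠ b+1) (h3 : ¬(a = 2*n+2 ∧ b = 1)) :
    lab n k l a b = 0 := by
  unfold lab
  rw [if_neg (by omega), if_neg (by omega), if_neg (by omega), if_neg (by omega),
    if_neg (by omega), if_neg h3]

lemma lab_gap (hn : 1 ≤ n) : lab n k l (n+2) (n+1) = 0 := by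
  unfold lab
  rw [if_neg (by omega), if_neg (by omega), if_neg (by omega), if_neg (by omega),
    if_neg (by omega), if_neg (by omega)]

lemma lab_b0 (a : ℕ) : lab n k l a 0 = 0 := by
  unfold lab
  rw [if_neg (by omega), if_neg (by omega), if_neg (by omega), if_neg (by omega),
    if_neg (by omega), if_neg (by omega)]

end labeval

-- sum helpers
lemma sum_single' (N p : ℕ) (f : ℕ → ℝ) (hp : p < N)
    (h0 : ∀ j, j < N → j ≠ p → f j = 0) : ∑ j ∈ range N, f j = f p :=
  Finset.sum_eq_single_of_mem p (mem_range.2 hp)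
    (fun j hj hne => h0 j (mem_range.1 hj) hne)

lemma sum_pair' (N p q : ℕ) (f : ℕ → ℝ) (hpq : p ≠ q) (hp : p < N) (hq : q < N)
    (h0 : ∀ j, j < N → j ≠ p → j ≠ q → f j = 0) :
    ∑ j ∈ range N, f j = f p + f q := by
  rw [← Finset.sum_pair hpq]
  refine (Finset.sum_subset ?_ ?_).symm
  · intro t ht
    simp only [Finset.mem_insert, Finset.mem_singleton] at ht
    rcases ht with h|h <;> subst h <;> exact mem_range.2 (by assumption)
  · intro j hj hnot
    simp only [Finset.mem_insert, Finset.mem_singleton, not_or] at hnot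
    exact h0 j (mem_range.1 hj) hnot.1 hnot.2

-- psiN evaluation
section psieval
variable {n : ℕ} {x : Fin (2*n+4) → ℝ}

lemma psiN_one (m : ℕ) (h : m = 1) : psiN n x m = X n x 1 * X n x 3 := by
  subst h; unfold psiN; rw [if_pos rfl]

lemma psiN_mid (m v : ℕ) (h1 : 2 ≤ m) (h2 : m ≤ n+1) (hv : v = 2*m+1) :
    psiN n x m = X n x v := by
  subst hv; unfold psiN; rw [if_neg (by omega), if_pos h2]

lemma psiN_n2 (m : ℕ) (h : m = n+2) : psiN n x m = X n x 2 * X n x 4 := by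
  subst h; unfold psiN; rw [if_neg (by omega), if_neg (by omega), if_pos rfl]

lemma psiN_hi (m v : ℕ) (h1 : n+3 ≤ m) (h2 : m ≤ 2*n+2) (hv : v = 4*n+10-2*m) :
    psiN n x m = X n x v := by
  unfold psiN
  rw [if_neg (by omega), if_neg (by omega), if_neg (by omega),
    show 2*n+6-2*(m-(n+2)) = v by omega]

end psieval

-- rN evaluation
section rneval
variable {n : ℕ} {k l : ℕ → ℝ} {x : Fin (2*n+4) → ℝ}

lemma rN_one (a : ℕ) (h : a = 1) :
    rN n k l x a = k 1 * X n x 1 * X n x 3 - k 2 * X n x 5 := by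
  subst h; unfold rN; rw [if_pos rfl]

lemma rN_mid (a v1 v2 v3 v4 : ℕ) (h1 : 2 ≤ a) (h2 : a ≤ n)
    (e1 : v1 = 2*a-1) (e2 : v2 = 2*a+1) (e3 : v3 = 2*a) (e4 : v4 = 2*a+3) :
    rN n k l x a = k v1 * X n x v2 - k v3 * X n x v4 := by
  unfold rN
  rw [if_neg (by omega), if_pos h2, show 2*(a-1)+1 = v1 by omega,
    show 2*(a-1)+3 = v2 by omega, show 2*(a-1)+2 = v3 by omega,
    show 2*(a-1)+5 = v4 by omega]

lemma rN_n1 (hn : 1 ≤ n) (a : ℕ) (h : a = n+1) :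
    rN n k l x a = k (2*n+1) * X n x (2*n+3) := by
  subst h; unfold rN; rw [if_neg (by omega), if_neg (by omega), if_pos rfl]

lemma rN_n2 (a : ℕ) (h : a = n+2) :
    rN n k l x a = l (2*n+1) * X n x 2 * X n x 4 - l (2*n) * X n x (2*n+4) := by
  subst h; unfold rN
  rw [if_neg (by omega), if_neg (by omega), if_neg (by omega), if_pos rfl]

lemma rN_hi (a v1 v2 v3 v4 : ℕ) (h1 : n+3 ≤ a) (h2 : a ≤ 2*n+1)
    (e1 : v1 = 4*n+5-2*a) (e2 : v2 = 4*n+10-2*a) (e3 : v3 = 4*n+4-2*a)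
    (e4 : v4 = 4*n+8-2*a) :
    rN n k l x a = l v1 * X n x v2 - l v3 * X n x v4 := by
  unfold rN
  rw [if_neg (by omega), if_neg (by omega), if_neg (by omega), if_neg (by omega),
    if_pos h2, show 2*(n-(a-(n+2)))+6 = v2 by omega,
    show 2*(n-(a-(n+2)))+4 = v4 by omega, show 2*(n-(a-(n+2)))+1 = v1 by omega,
    show 2*(n-(a-(n+2))) = v3 by omega]

lemma rN_last (hn : 1 ≤ n) (a : ℕ) (h : a = 2*n+2) :
    rN n k l x a = l 1 * X n x 6 := by
  subst h; unfold rN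
  rw [if_neg (by omega), if_neg (by omega), if_neg (by omega), if_neg (by omega),
    if_neg (by omega)]

end rneval

-- the generalized mass-action vector field coordinate, 0-based index c0
def Fv (n : ℕ) (k l : ℕ → ℝ) (x : Fin (2*n+4) → ℝ) (c0 : ℕ) : ℝ :=
  (∑ j ∈ range (2*n+2), lab n k l (j+1) (c0+1) * psiN n x (j+1))
    - (∑ b ∈ range (2*n+3), lab n k l (c0+1) b) * psiN n x (c0+1)

lemma Asum (n : ℕ) (k l : ℕ → ℝ) (x : Fin (2*n+4) → ℝ) (d : Fin (2*n+2)) :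
    (∑ i : Fin (2*n+2), Atilde n k l d i * Psi n x i) = Fv n k l x (d : ℕ) := by
  have key : ∀ i : Fin (2*n+2), Atilde n k l d i * Psi n x i
      = lab n k l ((i:ℕ)+1) ((d:ℕ)+1) * psiN n x ((i:ℕ)+1)
        + (if i = d then
            -(∑ b ∈ range (2*n+3), lab n k l ((d:ℕ)+1) b) * psiN n x ((d:ℕ)+1)
          else 0) := by
    intro i
    by_cases h : i = d
    · subst h
      rw [Psi_eq, if_pos rfl,
        lab_zero ((i:ℕ)+1) ((i:ℕ)+1) (by omega) (by omega) (by omega), zero_mul,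
        zero_add]
      have hA : Atilde n k l i i
          = -(∑ b ∈ range (2*n+3), lab n k l ((i:ℕ)+1) b) := by
        simp only [Atilde, Matrix.of_apply, eq_self_iff_true, if_true]
      rw [hA]
    · have hA : Atilde n k l d i = lab n k l ((i:ℕ)+1) ((d:ℕ)+1) := by
        simp only [Atilde, Matrix.of_apply, if_neg (Ne.symm h)]
      rw [Psi_eq, if_neg h, add_zero, hA]
  rw [Finset.sum_congr rfl (fun i _ => key i), Finset.sum_add_distrib]
  rw [Finset.sum_ite_eq' Finset.univ d
    (fun _ => -(∑ b ∈ range (2*n+3), lab n k l ((d:ℕ)+1) b) * psiN n x ((d:ℕ)+1)),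
    if_pos (Finset.mem_univ d)]
  rw [Fin.sum_univ_eq_sum_range
    (fun j => lab n k l (j+1) ((d:ℕ)+1) * psiN n x (j+1)) (2*n+2)]
  unfold Fv; ring

lemma core (n : ℕ) (hn : 1 ≤ n) (k l : ℕ → ℝ) (x : Fin (2*n+4) → ℝ)
    (c0 : ℕ) (hc : c0 < 2*n+2) :
    Fv n k l x c0
      = rN n k l x (if c0 = 0 then 2*n+2 else c0) - rN n k l x (c0+1) := by
  unfold Fv
  by_cases h1 : c0 = 0
  -- node m = 1
  · subst h1
    rw [if_pos rfl, show (0:ℕ)+1 = 1 from rfl,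
      sum_pair' (2*n+2) 1 (2*n+1) (fun j => lab n k l (j+1) 1 * psiN n x (j+1))
        (by omega) (by omega) (by omega)
        (fun j hj hp hq => mul_eq_zero_of_left
          (lab_zero _ _ (by omega) (by omega) (by omega)) _),
      sum_single' (2*n+3) 2 (fun b => lab n k l 1 b) (by omega)
        (fun b hb hne => by
          rcases Nat.eq_zero_or_pos b with h0|h0
          · subst h0; exact lab_b0 _
          · exact lab_zero _ _ (by omega) (by omega) (by omega)),
      show (1:ℕ)+1 = 2 from rfl, show 2*n+1+1 = 2*n+2 from rfl,
      lab_bk 2 1 2 (by omega) hn rfl rfl,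
      lab_last hn (2*n+2) 1 rfl rfl,
      lab_fk 1 2 1 (by omega) hn rfl (by omega),
      psiN_mid 2 5 (by omega) (by omega) (by omega),
      psiN_hi (2*n+2) 6 (by omega) (by omega) (by omega),
      psiN_one 1 rfl,
      rN_last hn (2*n+2) rfl, rN_one 1 rfl]
    ring
  · by_cases h2 : c0 = n
    -- node m = n+1
    · rw [h2]
      rw [if_neg (by omega),
        sum_single' (2*n+2) (n-1) (fun j => lab n k l (j+1) (n+1) * psiN n x (j+1))
          (by omega)
          (fun j hj hp => by
            by_cases hg : j = n+1
            · subst hg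
              show lab n k l (n+1+1) (n+1) * psiN n x (n+1+1) = 0
              rw [show n+1+1 = n+2 from rfl, lab_gap hn, zero_mul]
            · exact mul_eq_zero_of_left
                (lab_zero _ _ (by omega) (by omega) (by omega)) _),
        sum_pair' (2*n+3) n (n+2) (fun b => lab n k l (n+1) b)
          (by omega) (by omega) (by omega)
          (fun b hb hp hq => by
            rcases Nat.eq_zero_or_pos b with h0|h0
            · subst h0; exact lab_b0 _
            · exact lab_zero _ _ (by omega) (by omega) (by omega)),
        show n-1+1 = n from by omega,
        lab_fk n (n+1) (2*n-1) hn le_rfl rfl rfl,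
        lab_bk (n+1) n (2*n) hn le_rfl rfl rfl,
        lab_kmid (n+1) (n+2) (2*n+1) rfl rfl rfl,
        psiN_mid (n+1) (2*n+3) (by omega) (by omega) (by omega)]
      rcases eq_or_lt_of_le hn with hn1|hn2
      · -- n = 1
        subst hn1
        rw [psiN_one 1 rfl, rN_one 1 rfl, rN_n1 (by omega) 2 rfl]
        norm_num
        ring
      · -- n ≥ 2
        rw [psiN_mid n (2*n+1) (by omega) (by omega) rfl,
          rN_mid n (2*n-1) (2*n+1) (2*n) (2*n+3) (by omega) (by omega) rfl rfl rfl rfl,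
          rN_n1 hn (n+1) rfl]
        ring
    · by_cases h3 : c0 + 1 ≤ n
      -- node m = c0+1, 2 ≤ m ≤ n (so n ≥ 2, 1 ≤ c0 ≤ n-1)
      · have hc1 : 1 ≤ c0 := by omega
        by_cases h4 : c0 = 1
        -- m = 2
        · subst h4
          rw [if_neg (by omega), show (1:ℕ)+1 = 2 from rfl,
            sum_pair' (2*n+2) 0 2 (fun j => lab n k l (j+1) 2 * psiN n x (j+1))
              (by omega) (by omega) (by omega)
              (fun j hj hp hq => mul_eq_zero_of_left
                (lab_zero _ _ (by omega) (by omega) (by omega)) _),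
            sum_pair' (2*n+3) 1 3 (fun b => lab n k l 2 b)
              (by omega) (by omega) (by omega)
              (fun b hb hp hq => by
                rcases Nat.eq_zero_or_pos b with h0|h0
                · subst h0; exact lab_b0 _
                · exact lab_zero _ _ (by omega) (by omega) (by omega)),
            show (0:ℕ)+1 = 1 from rfl, show (2:ℕ)+1 = 3 from rfl,
            lab_fk 1 2 1 (by omega) hn rfl (by omega),
            lab_bk 3 2 4 (by omega) (by omega) rfl (by omega),
            lab_bk 2 1 2 (by omega) hn rfl (by omega),
            lab_fk 2 3 3 (by omega) (by omega) rfl (by omega),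
            psiN_one 1 rfl,
            psiN_mid 3 7 (by omega) (by omega) (by omega),
            psiN_mid 2 5 (by omega) (by omega) (by omega),
            rN_one 1 rfl,
            rN_mid 2 3 5 4 7 (by omega) (by omega) (by omega) (by omega) (by omega)
              (by omega)]
          ring
        -- 3 ≤ m ≤ n
        · rw [if_neg (by omega),
            sum_pair' (2*n+2) (c0-1) (c0+1)
              (fun j => lab n k l (j+1) (c0+1) * psiN n x (j+1))
              (by omega) (by omega) (by omega)
              (fun j hj hp hq => mul_eq_zero_of_left
                (lab_zero _ _ (by omega) (by omega) (by omega)) _),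
            sum_pair' (2*n+3) c0 (c0+2) (fun b => lab n k l (c0+1) b)
              (by omega) (by omega) (by omega)
              (fun b hb hp hq => by
                rcases Nat.eq_zero_or_pos b with h0|h0
                · subst h0; exact lab_b0 _
                · exact lab_zero _ _ (by omega) (by omega) (by omega)),
            show c0-1+1 = c0 from by omega, show c0+1+1 = c0+2 from rfl,
            lab_fk c0 (c0+1) (2*c0-1) (by omega) (by omega) rfl rfl,
            lab_bk (c0+2) (c0+1) (2*c0+2) (by omega) (by omega) rfl (by omega),
            lab_bk (c0+1) c0 (2*c0) (by omega) (by omega) rfl rfl,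
            lab_fk (c0+1) (c0+2) (2*c0+1) (by omega) (by omega) rfl (by omega),
            psiN_mid c0 (2*c0+1) (by omega) (by omega) rfl,
            psiN_mid (c0+2) (2*c0+5) (by omega) (by omega) (by omega),
            psiN_mid (c0+1) (2*c0+3) (by omega) (by omega) (by omega),
            rN_mid c0 (2*c0-1) (2*c0+1) (2*c0) (2*c0+3) (by omega) (by omega) rfl rfl
              rfl rfl,
            rN_mid (c0+1) (2*c0+1) (2*c0+3) (2*c0+2) (2*c0+5) (by omega) (by omega)
              (by omega) (by omega) (by omega) (by omega)]
          ring
      · by_cases h4 : c0 = n+1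
        -- node m = n+2
        · subst h4
          rw [if_neg (by omega), show n+1+1 = n+2 from rfl,
            sum_pair' (2*n+2) n (n+2) (fun j => lab n k l (j+1) (n+2) * psiN n x (j+1))
              (by omega) (by omega) (by omega)
              (fun j hj hp hq => mul_eq_zero_of_left
                (lab_zero _ _ (by omega) (by omega) (by omega)) _),
            sum_single' (2*n+3) (n+3) (fun b => lab n k l (n+2) b) (by omega)
              (fun b hb hne => by
                rcases Nat.eq_zero_or_pos b with h0|h0
                · subst h0; exact lab_b0 _
                · by_cases hg : b = n+1
                  · subst hg; exact lab_gap hn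
                  · exact lab_zero _ _ (by omega) (by omega) (by omega)),
            show n+1+1 = n+2 from rfl, show n+2+1 = n+3 from rfl,
            lab_kmid (n+1) (n+2) (2*n+1) rfl rfl rfl,
            lab_bl (n+3) (n+2) (2*n) (by omega) (by omega) rfl (by omega),
            lab_fl (n+2) (n+3) (2*n+1) (by omega) (by omega) rfl (by omega),
            psiN_mid (n+1) (2*n+3) (by omega) (by omega) (by omega),
            psiN_hi (n+3) (2*n+4) (by omega) (by omega) (by omega),
            psiN_n2 (n+2) rfl,
            rN_n1 hn (n+1) rfl, rN_n2 (n+2) rfl]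
          ring
        · by_cases h5 : c0 = 2*n+1
          -- node m = 2n+2
          · subst h5
            rw [if_neg (by omega), show 2*n+1+1 = 2*n+2 from rfl,
              sum_single' (2*n+2) (2*n)
                (fun j => lab n k l (j+1) (2*n+2) * psiN n x (j+1)) (by omega)
                (fun j hj hp => mul_eq_zero_of_left
                  (lab_zero _ _ (by omega) (by omega) (by omega)) _),
              sum_pair' (2*n+3) 1 (2*n+1) (fun b => lab n k l (2*n+2) b)
                (by omega) (by omega) (by omega)
                (fun b hb hp hq => by
                  rcases Nat.eq_zero_or_pos b with h0|h0
                  · subst h0; exact lab_b0 _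
                  · exact lab_zero _ _ (by omega) (by omega) (by omega)),
              show 2*n+1 = 2*n+1 from rfl,
              lab_fl (2*n+1) (2*n+2) 3 (by omega) (by omega) rfl (by omega),
              lab_last hn (2*n+2) 1 rfl rfl,
              lab_bl (2*n+2) (2*n+1) 2 (by omega) (by omega) rfl (by omega),
              psiN_hi (2*n+2) 6 (by omega) (by omega) (by omega),
              rN_last hn (2*n+2) rfl]
            rcases eq_or_lt_of_le hn with hn1|hn2
            · -- n = 1
              subst hn1
              rw [show 2*1 = 2 from rfl, show (2:ℕ)+1 = 3 from rfl,
                psiN_n2 3 (by omega), rN_n2 3 (by omega)]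
              norm_num
              ring
            · -- n ≥ 2
              rw [show 2*n+1 = 2*n+1 from rfl,
                psiN_hi (2*n+1) 8 (by omega) (by omega) (by omega),
                rN_hi (2*n+1) 3 8 2 6 (by omega) (by omega) (by omega) (by omega)
                  (by omega) (by omega)]
              ring
          -- node m = c0+1, n+3 ≤ m ≤ 2n+1
          · have hm1 : n+2 ≤ c0 := by omega
            have hm2 : c0 ≤ 2*n := by omega
            by_cases h6 : c0 = n+2
            -- m = n+3 (n ≥ 2)
            · have hn2 : 2 ≤ n := by omega
              subst h6
              rw [if_neg (by omega), show n+2+1 = n+3 from rfl,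
                sum_pair' (2*n+2) (n+1) (n+3)
                  (fun j => lab n k l (j+1) (n+3) * psiN n x (j+1))
                  (by omega) (by omega) (by omega)
                  (fun j hj hp hq => mul_eq_zero_of_left
                    (lab_zero _ _ (by omega) (by omega) (by omega)) _),
                sum_pair' (2*n+3) (n+2) (n+4) (fun b => lab n k l (n+3) b)
                  (by omega) (by omega) (by omega)
                  (fun b hb hp hq => by
                    rcases Nat.eq_zero_or_pos b with h0|h0
                    · subst h0; exact lab_b0 _
                    · exact lab_zero _ _ (by omega) (by omega) (by omega)),
                show n+1+1 = n+2 from rfl, show n+3+1 = n+4 from rfl,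
                lab_fl (n+2) (n+3) (2*n+1) (by omega) (by omega) rfl (by omega),
                lab_bl (n+4) (n+3) (2*n-2) (by omega) (by omega) rfl (by omega),
                lab_bl (n+3) (n+2) (2*n) (by omega) (by omega) rfl (by omega),
                lab_fl (n+3) (n+4) (2*n-1) (by omega) (by omega) rfl (by omega),
                psiN_n2 (n+2) rfl,
                psiN_hi (n+4) (2*n+2) (by omega) (by omega) (by omega),
                psiN_hi (n+3) (2*n+4) (by omega) (by omega) (by omega),
                rN_n2 (n+2) rfl,
                rN_hi (n+3) (2*n-1) (2*n+4) (2*n-2) (2*n+2) (by omega) (by omega)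
                  (by omega) (by omega) (by omega) (by omega)]
              ring
            -- n+4 ≤ m ≤ 2n+1 (n ≥ 3)
            · have hm3 : n+3 ≤ c0 := by omega
              rw [if_neg (by omega),
                sum_pair' (2*n+2) (c0-1) (c0+1)
                  (fun j => lab n k l (j+1) (c0+1) * psiN n x (j+1))
                  (by omega) (by omega) (by omega)
                  (fun j hj hp hq => mul_eq_zero_of_left
                    (lab_zero _ _ (by omega) (by omega) (by omega)) _),
                sum_pair' (2*n+3) c0 (c0+2) (fun b => lab n k l (c0+1) b)
                  (by omega) (by omega) (by omega)
                  (fun b hb hp hq => by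
                    rcases Nat.eq_zero_or_pos b with h0|h0
                    · subst h0; exact lab_b0 _
                    · exact lab_zero _ _ (by omega) (by omega) (by omega)),
                show c0-1+1 = c0 from by omega, show c0+1+1 = c0+2 from rfl,
                lab_fl c0 (c0+1) (4*n+5-2*c0) (by omega) (by omega) rfl (by omega),
                lab_bl (c0+2) (c0+1) (4*n+2-2*c0) (by omega) (by omega) rfl (by omega),
                lab_bl (c0+1) c0 (4*n+4-2*c0) (by omega) (by omega) rfl (by omega),
                lab_fl (c0+1) (c0+2) (4*n+3-2*c0) (by omega) (by omega) rfl (by omega),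
                psiN_hi c0 (4*n+10-2*c0) (by omega) (by omega) (by omega),
                psiN_hi (c0+2) (4*n+6-2*c0) (by omega) (by omega) (by omega),
                psiN_hi (c0+1) (4*n+8-2*c0) (by omega) (by omega) (by omega),
                rN_hi c0 (4*n+5-2*c0) (4*n+10-2*c0) (4*n+4-2*c0) (4*n+8-2*c0)
                  (by omega) (by omega) (by omega) (by omega) (by omega) (by omega),
                rN_hi (c0+1) (4*n+3-2*c0) (4*n+8-2*c0) (4*n+2-2*c0) (4*n+6-2*c0)
                  (by omega) (by omega) (by omega) (by omega) (by omega) (by omega)]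
              ring
-- evaluation of the columns of Γ (0-based index)
section gyeval
variable {n : ℕ}

lemma gN_1 : gN n 0 = E n 5 - E n 1 - E n 3 := by
  unfold gN; rw [if_pos rfl]

lemma gN_k (c0 v1 v2 : ℕ) (h1 : 1 ≤ c0) (h2 : c0+1 ≤ n)
    (hv1 : v1 = 2*c0+5) (hv2 : v2 = 2*c0+3) : gN n c0 = E n v1 - E n v2 := by
  unfold gN
  rw [if_neg (by omega), if_pos h2, show 2*(c0+1-1)+5 = v1 by omega,
    show 2*(c0+1-1)+3 = v2 by omega]

lemma gN_n1 (hn : 1 ≤ n) : gN n n = E n 1 + E n 4 - E n (2*n+3) := by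
  unfold gN; rw [if_neg (by omega), if_neg (by omega), if_pos rfl]

lemma gN_n2 : gN n (n+1) = E n (2*n+4) - E n 2 - E n 4 := by
  unfold gN
  rw [if_neg (by omega), if_neg (by omega), if_neg (by omega), if_pos rfl]

lemma gN_l (c0 v1 v2 : ℕ) (h1 : n+2 ≤ c0) (h2 : c0 ≤ 2*n)
    (hv1 : v1 = 4*n+6-2*c0) (hv2 : v2 = 4*n+8-2*c0) :
    gN n c0 = E n v1 - E n v2 := by
  unfold gN
  rw [if_neg (by omega), if_neg (by omega), if_neg (by omega), if_neg (by omega),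
    if_pos (by omega), show 2*n+4-2*(c0+1-(n+2)) = v1 by omega,
    show 2*n+6-2*(c0+1-(n+2)) = v2 by omega]

lemma gN_last (hn : 1 ≤ n) : gN n (2*n+1) = E n 2 + E n 3 - E n 6 := by
  unfold gN
  rw [if_neg (by omega), if_neg (by omega), if_neg (by omega), if_neg (by omega),
    if_neg (by omega)]

-- evaluation of the rows of Ỹ (0-based index)
lemma yN_1 : yN n 0 = E n 1 + E n 2 + E n 3 := by
  unfold yN; rw [if_pos rfl]

lemma yN_mid (r0 v : ℕ) (h1 : 1 ≤ r0) (h2 : r0 ≤ n) (hv : v = 2*r0+3) :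
    yN n r0 = E n 2 + E n v := by
  unfold yN
  rw [if_neg (by omega), if_pos (by omega), show 2*(r0+1-2)+5 = v by omega]

lemma yN_n2 : yN n (n+1) = E n 1 + E n 2 + E n 4 := by
  unfold yN; rw [if_neg (by omega), if_neg (by omega), if_pos rfl]

lemma yN_hi (r0 v : ℕ) (h1 : n+2 ≤ r0) (h2 : r0 ≤ 2*n+1) (hv : v = 4*n+8-2*r0) :
    yN n r0 = E n 1 + E n v := by
  unfold yN
  rw [if_neg (by omega), if_neg (by omega), if_neg (by omega),
    show 2*n+4-2*(r0+1-(n+3)) = v by omega]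

end gyeval

lemma gamma_row (n : ℕ) (hn : 1 ≤ n) (c0 : ℕ) (hc : c0 < 2*n+2) (r : Fin (2*n+4)) :
    gN n c0 r = yN n (if c0 = 2*n+1 then 0 else c0+1) r - yN n c0 r := by
  by_cases h1 : c0 = 0
  · subst h1
    rw [if_neg (by omega), gN_1, show (0:ℕ)+1 = 1 from rfl,
      yN_mid 1 5 (by omega) (by omega) (by omega), yN_1]
    simp only [Pi.add_apply, Pi.sub_apply]; ring
  · by_cases h2 : c0 + 1 ≤ n
    · rw [if_neg (by omega), gN_k c0 (2*c0+5) (2*c0+3) (by omega) h2 rfl rfl,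
        yN_mid (c0+1) (2*c0+5) (by omega) (by omega) (by omega),
        yN_mid c0 (2*c0+3) (by omega) (by omega) (by omega)]
      simp only [Pi.add_apply, Pi.sub_apply]; ring
    · by_cases h3 : c0 = n
      · rw [h3, if_neg (by omega), gN_n1 hn, yN_n2,
          yN_mid n (2*n+3) (by omega) (by omega) (by omega)]
        simp only [Pi.add_apply, Pi.sub_apply]; ring
      · by_cases h4 : c0 = n+1
        · rw [h4, if_neg (by omega), gN_n2, show n+1+1 = n+2 from rfl,
            yN_hi (n+2) (2*n+4) (by omega) (by omega) (by omega), yN_n2]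
          simp only [Pi.add_apply, Pi.sub_apply]; ring
        · by_cases h5 : c0 = 2*n+1
          · rw [h5, if_pos rfl, gN_last hn, yN_1,
              yN_hi (2*n+1) 6 (by omega) (by omega) (by omega)]
            simp only [Pi.add_apply, Pi.sub_apply]; ring
          · rw [if_neg (by omega),
              gN_l c0 (4*n+6-2*c0) (4*n+8-2*c0) (by omega) (by omega) rfl rfl,
              yN_hi (c0+1) (4*n+6-2*c0) (by omega) (by omega) (by omega),
              yN_hi c0 (4*n+8-2*c0) (by omega) (by omega) (by omega)]
            simp only [Pi.add_apply, Pi.sub_apply]; ring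

lemma reindex_cyc (N M : ℕ) (hM : M+1 = N) (u v : ℕ → ℝ) :
    ∑ j ∈ range N, u (if j = M then 0 else j+1) * v j
      = ∑ j ∈ range N, u j * v (if j = 0 then M else j-1) := by
  refine Finset.sum_nbij' (fun j => if j = M then 0 else j+1)
    (fun j => if j = 0 then M else j-1) ?_ ?_ ?_ ?_ ?_ <;>
    intro a ha <;> simp only [mem_range] at *
  · split_ifs <;> omega
  · split_ifs <;> omega
  · show (if (if a = M then 0 else a+1) = 0 then M
        else (if a = M then 0 else a+1) - 1) = a
    by_cases p : a = M
    · rw [if_pos p, if_pos rfl]; omega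
    · rw [if_neg p, if_neg (Nat.succ_ne_zero a)]; omega
  · show (if (if a = 0 then M else a-1) = M then 0
        else (if a = 0 then M else a-1)+1) = a
    by_cases p : a = 0
    · rw [if_pos p, if_pos rfl]; omega
    · rw [if_neg p, if_neg (by omega)]; omega
  · show u (if a = M then 0 else a+1) * v a
        = u (if a = M then 0 else a+1)
          * v (if (if a = M then 0 else a+1) = 0 then M
              else (if a = M then 0 else a+1) - 1)
    by_cases h : a = M
    · rw [if_pos h, if_pos rfl, h]
    · rw [if_neg h, if_neg (Nat.succ_ne_zero a), Nat.add_sub_cancel]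

/-- For every `x`, the polynomial identity `Γ·R(x) = Ỹᵗ·Ã_κᵗ·Ψ(x)` holds: the mass-action
system of the processive `n`-site network coincides with the generalized mass-action
system defined by its weakly reversible translation. -/
theorem translation_identity (n : ℕ) (hn : 1 ≤ n) (k l : ℕ → ℝ)
    (hk : ∀ i, 1 ≤ i → i ≤ 2*n+1 → 0 < k i)
    (hl : ∀ i, 1 ≤ i → i ≤ 2*n+1 → 0 < l i) :
    ∀ x : Fin (2*n+4) → ℝ,
      (Gamma n).mulVec (Rvec n k l x)
        = (Ytilde n)ᵀ.mulVec ((Atilde n k l).mulVec (Psi n x)) := by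


  intro x
  funext r
  simp only [Matrix.mulVec, dotProduct]
  have e1 : ∑ c : Fin (2*n+2), Gamma n r c * Rvec n k l x c
      = ∑ j ∈ range (2*n+2), gN n j r * rN n k l x (j+1) :=
    Fin.sum_univ_eq_sum_range (fun j => gN n j r * rN n k l x (j+1)) (2*n+2)
  have h2 : ∀ d : Fin (2*n+2),
      (Ytilde n)ᵀ r d * (∑ i : Fin (2*n+2), Atilde n k l d i * Psi n x i)
        = yN n (d : ℕ) r * Fv n k l x (d : ℕ) := by
    intro d
    rw [Matrix.transpose_apply, Asum n k l x d, Ytilde_eq]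
  have e2 : ∑ d : Fin (2*n+2),
      (Ytilde n)ᵀ r d * (∑ i : Fin (2*n+2), Atilde n k l d i * Psi n x i)
        = ∑ j ∈ range (2*n+2), yN n j r * Fv n k l x j :=
    (Finset.sum_congr rfl (fun d _ => h2 d)).trans
      (Fin.sum_univ_eq_sum_range (fun j => yN n j r * Fv n k l x j) (2*n+2))
  rw [e1, e2]
  have e3 : ∑ j ∈ range (2*n+2), yN n j r * Fv n k l x j
      = ∑ j ∈ range (2*n+2), yN n j r
          * (rN n k l x (if j = 0 then 2*n+2 else j) - rN n k l x (j+1)) :=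
    Finset.sum_congr rfl (fun j hj => by rw [core n hn k l x j (mem_range.1 hj)])
  have e4 : ∑ j ∈ range (2*n+2), gN n j r * rN n k l x (j+1)
      = ∑ j ∈ range (2*n+2),
          (yN n (if j = 2*n+1 then 0 else j+1) r - yN n j r) * rN n k l x (j+1) :=
    Finset.sum_congr rfl (fun j hj => by rw [gamma_row n hn j (mem_range.1 hj) r])
  rw [e3, e4]
  simp only [sub_mul, mul_sub]
  rw [Finset.sum_sub_distrib, Finset.sum_sub_distrib]
  congr 1
  rw [reindex_cyc (2*n+2) (2*n+1) rfl (fun t => yN n t r)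
    (fun t => rN n k l x (t+1))]
  refine Finset.sum_congr rfl (fun j hj => ?_)
  by_cases h : j = 0
  · rw [if_pos h, if_pos h, show 2*n+1+1 = 2*n+2 from rfl]
  · rw [if_neg h, if_neg h, show j-1+1 = j from by omega]

end
end

section
/- The (2n+2)×(2n+2) matrix Ã_κᵗ has rank 2n+1, and its kernel is spanned by a vector all of whose coordinates are strictly positive. -/
open Matrix Finset

noncomputable section

variable {n : ℕ} {k l : ℕ → ℝ}

lemma lab_eq_zero (a b : ℕ)
    (h1 : ¬ (1 ≤ a ∧ a ≤ 2*n+1 ∧ b = a+1))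
    (h2 : ¬ (2 ≤ a ∧ a ≤ 2*n+2 ∧ b+1 = a))
    (h3 : ¬ (a = 2*n+2 ∧ b = 1)) : lab n k l a b = 0 := by
  unfold lab
  split_ifs <;> first | rfl | (exfalso; omega)

lemma out_eq (hn : 1 ≤ n) (a : ℕ) (ha : 1 ≤ a) (ha2 : a ≤ 2*n+2) :
    ∑ b ∈ Finset.range (2*n+3), lab n k l a b
      = lab n k l a (a+1) + lab n k l a (a-1)
        + (if a = 2*n+2 then lab n k l (2*n+2) 1 else 0) := by
  have key : ∀ b ∈ Finset.range (2*n+3), lab n k l a b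
      = (if b = a+1 then lab n k l a (a+1) else 0)
        + (if b = a-1 then lab n k l a (a-1) else 0)
        + (if b = 1 then (if a = 2*n+2 then lab n k l (2*n+2) 1 else 0) else 0) := by
    intro b hb
    simp only [Finset.mem_range] at hb
    by_cases e1 : b = a+1
    · subst e1
      rw [if_pos rfl, if_neg (by omega), if_neg (by omega)]
      ring
    · by_cases e2 : b = a-1
      · subst e2
        rw [if_neg e1, if_pos rfl]
        by_cases e3 : a = 2
        · subst e3
          rw [if_pos rfl, if_neg (by omega)]
          ring
        · rw [if_neg (by omega)]
          by_cases e4 : 2 ≤ a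
          · ring
          · have ha1 : a = 1 := by omega
            subst ha1
            rw [lab_eq_zero 1 0 (by omega) (by omega) (by omega)]
            ring
      · rw [if_neg e1, if_neg e2]
        by_cases e3 : b = 1
        · rw [if_pos e3]
          by_cases e4 : a = 2*n+2
          · rw [if_pos e4, e4, e3]
            ring
          · rw [if_neg e4, lab_eq_zero a b (by omega) (by omega) (by omega)]
            ring
        · rw [if_neg e3, lab_eq_zero a b (by omega) (by omega) (by omega)]
          ring
  have r2 : a-1 ∈ Finset.range (2*n+3) := by apply Finset.mem_range.2; omega
  have r3 : 1 ∈ Finset.range (2*n+3) := by apply Finset.mem_range.2; omega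
  rw [Finset.sum_congr rfl key, Finset.sum_add_distrib, Finset.sum_add_distrib,
    Finset.sum_ite_eq' _ (a+1) (fun _ => lab n k l a (a+1)),
    Finset.sum_ite_eq' _ (a-1) (fun _ => lab n k l a (a-1)),
    Finset.sum_ite_eq' _ 1 (fun _ => if a = 2*n+2 then lab n k l (2*n+2) 1 else 0),
    if_pos r2, if_pos r3]
  by_cases e : a = 2*n+2
  · have hmem : a+1 ∉ Finset.range (2*n+3) := by simp only [Finset.mem_range]; omega
    rw [if_neg hmem, lab_eq_zero a (a+1) (by omega) (by omega) (by omega)]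
  · rw [if_pos (by apply Finset.mem_range.2; omega)]

lemma in_eq (hn : 1 ≤ n) (m : ℕ) (hm : 1 ≤ m) (hm2 : m ≤ 2*n+2) (c : ℕ → ℝ) :
    ∑ i ∈ Finset.range (2*n+2), lab n k l (i+1) m * c i
      = lab n k l (m-1) m * c (m-2) + lab n k l (m+1) m * c m
        + (if m = 1 then lab n k l (2*n+2) 1 * c (2*n+1) else 0) := by
  have key : ∀ i ∈ Finset.range (2*n+2), lab n k l (i+1) m * c i
      = (if i = m-2 then lab n k l (m-1) m * c (m-2) else 0)
        + (if i = m then lab n k l (m+1) m * c m else 0)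
        + (if i = 2*n+1 then (if m = 1 then lab n k l (2*n+2) 1 * c (2*n+1) else 0) else 0) := by
    intro i hi
    simp only [Finset.mem_range] at hi
    by_cases e1 : i = m-2
    · subst e1
      by_cases e2 : m = 1
      · subst e2
        rw [if_pos rfl, if_neg (by omega), if_neg (by omega),
          lab_eq_zero 1 1 (by omega) (by omega) (by omega),
          lab_eq_zero 0 1 (by omega) (by omega) (by omega)]
        ring
      · rw [if_pos rfl, if_neg (by omega), if_neg (by omega),
          show m-2+1 = m-1 by omega]
        ring
    · by_cases e2 : i = m
      · rw [if_neg e1, if_pos e2]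
        have h3 : (if i = 2*n+1 then (if m = 1 then lab n k l (2*n+2) 1 * c (2*n+1) else 0) else 0) = 0 := by
          split_ifs <;> first | rfl | (exfalso; omega)
        rw [h3, e2]
        ring
      · rw [if_neg e1, if_neg e2]
        by_cases e3 : i = 2*n+1
        · rw [if_pos e3]
          by_cases e4 : m = 1
          · rw [if_pos e4, e3, e4]
            norm_num
          · rw [if_neg e4, lab_eq_zero (i+1) m (by omega) (by omega) (by omega)]
            ring
        · rw [if_neg e3, lab_eq_zero (i+1) m (by omega) (by omega) (by omega)]
          ring
  have r1 : m-2 ∈ Finset.range (2*n+2) := by apply Finset.mem_range.2; omega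
  have r3 : 2*n+1 ∈ Finset.range (2*n+2) := by apply Finset.mem_range.2; omega
  rw [Finset.sum_congr rfl key, Finset.sum_add_distrib, Finset.sum_add_distrib,
    Finset.sum_ite_eq' _ (m-2) (fun _ => lab n k l (m-1) m * c (m-2)),
    Finset.sum_ite_eq' _ m (fun _ => lab n k l (m+1) m * c m),
    Finset.sum_ite_eq' _ (2*n+1) (fun _ => if m = 1 then lab n k l (2*n+2) 1 * c (2*n+1) else 0),
    if_pos r1, if_pos r3]
  by_cases e : m = 2*n+2
  · have hmem : m ∉ Finset.range (2*n+2) := by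
      simp only [Finset.mem_range]
      omega
    rw [if_neg hmem, lab_eq_zero (m+1) m (by omega) (by omega) (by omega),
      if_neg (by omega : ¬ m = 1)]
    ring
  · rw [if_pos (by apply Finset.mem_range.2; omega)]

def Yv (n : ℕ) (x : Fin (2*n+2) → ℝ) (m : ℕ) : ℝ :=
  if h : m - 1 < 2*n+2 then x ⟨m-1, h⟩ else 0

def rhoAux (n : ℕ) (k l : ℕ → ℝ) : ℕ → ℝ
  | 0 => 1 / l 1
  | t+1 => (1 + lab n k l (2*n+2-t) (2*n+1-t) * rhoAux n k l t) / lab n k l (2*n+1-t) (2*n+2-t)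

def rhoV (n : ℕ) (k l : ℕ → ℝ) : Fin (2*n+2) → ℝ := fun j => rhoAux n k l (2*n+1 - (j:ℕ))

def flux (n : ℕ) (k l : ℕ → ℝ) (x : Fin (2*n+2) → ℝ) (m : ℕ) : ℝ :=
  if m = 0 ∨ m = 2*n+2 then lab n k l (2*n+2) 1 * Yv n x (2*n+2)
  else lab n k l m (m+1) * Yv n x m - lab n k l (m+1) m * Yv n x (m+1)

lemma lab_nonneg (hk : ∀ i, 1 ≤ i → i ≤ 2*n+1 → 0 < k i)
    (hl : ∀ i, 1 ≤ i → i ≤ 2*n+1 → 0 < l i) (a b : ℕ) : 0 ≤ lab n k l a b := by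
  unfold lab
  split_ifs <;> first
    | exact le_refl 0
    | exact le_of_lt (hk _ (by omega) (by omega))
    | exact le_of_lt (hl _ (by omega) (by omega))

lemma lab_f_pos (hk : ∀ i, 1 ≤ i → i ≤ 2*n+1 → 0 < k i)
    (hl : ∀ i, 1 ≤ i → i ≤ 2*n+1 → 0 < l i) (m : ℕ) (h1 : 1 ≤ m) (h2 : m ≤ 2*n+1) :
    0 < lab n k l m (m+1) := by
  unfold lab
  split_ifs <;> first
    | exact hk _ (by omega) (by omega)
    | exact hl _ (by omega) (by omega)
    | (exfalso; omega)

lemma lab_wrap (hn : 1 ≤ n) : lab n k l (2*n+2) 1 = l 1 := by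
  unfold lab
  split_ifs <;> first | rfl | (exfalso; omega)

lemma rhoAux_pos (hk : ∀ i, 1 ≤ i → i ≤ 2*n+1 → 0 < k i)
    (hl : ∀ i, 1 ≤ i → i ≤ 2*n+1 → 0 < l i) :
    ∀ t, t ≤ 2*n+1 → 0 < rhoAux n k l t := by
  intro t
  induction t with
  | zero =>
    intro _
    have : 0 < l 1 := hl 1 le_rfl (by omega)
    simpa [rhoAux] using this
  | succ p ih =>
    intro hp
    have hnum : 0 < 1 + lab n k l (2*n+2-p) (2*n+1-p) * rhoAux n k l p := by
      have h1 := lab_nonneg hk hl (2*n+2-p) (2*n+1-p)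
      have h2 := ih (by omega)
      nlinarith
    have hden : 0 < lab n k l (2*n+1-p) (2*n+2-p) := by
      rw [show 2*n+2-p = (2*n+1-p)+1 by omega]
      exact lab_f_pos hk hl _ (by omega) (by omega)
    rw [rhoAux]
    exact div_pos hnum hden

lemma Yv_eq (x : Fin (2*n+2) → ℝ) (i : Fin (2*n+2)) : Yv n x ((i:ℕ)+1) = x i := by
  simp [Yv]

lemma Yv_rho (m : ℕ) (h1 : 1 ≤ m) (h2 : m ≤ 2*n+2) :
    Yv n (rhoV n k l) m = rhoAux n k l (2*n+2-m) := by
  unfold Yv rhoV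
  rw [dif_pos (by omega : m - 1 < 2*n+2)]
  show rhoAux n k l (2*n+1 - (m-1)) = rhoAux n k l (2*n+2-m)
  congr 1
  omega


lemma row_eq_s5 (hn : 1 ≤ n) (x : Fin (2*n+2) → ℝ) (j : Fin (2*n+2)) :
    (Atilde n k l).mulVec x j = flux n k l x (j:ℕ) - flux n k l x ((j:ℕ)+1) := by
  have hj : (j:ℕ) < 2*n+2 := j.isLt
  have step1 : ∀ i : Fin (2*n+2),
      Atilde n k l j i * x i
        = lab n k l ((i:ℕ)+1) ((j:ℕ)+1) * Yv n x ((i:ℕ)+1)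
          + (if i = j then
              (-(∑ b ∈ Finset.range (2*n+3), lab n k l ((j:ℕ)+1) b)
                - lab n k l ((j:ℕ)+1) ((j:ℕ)+1)) * Yv n x ((j:ℕ)+1) else 0) := by
    intro i
    by_cases h : i = j
    · subst h
      rw [show Atilde n k l i i
          = -(∑ b ∈ Finset.range (2*n+3), lab n k l ((i:ℕ)+1) b) from if_pos rfl,
        if_pos rfl, Yv_eq]
      ring
    · rw [show Atilde n k l j i = lab n k l ((i:ℕ)+1) ((j:ℕ)+1) from if_neg (Ne.symm h),
        if_neg h, Yv_eq]
      ring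
  have hsum : (Atilde n k l).mulVec x j
      = (∑ i ∈ Finset.range (2*n+2), lab n k l (i+1) ((j:ℕ)+1) * Yv n x (i+1))
        + (-(∑ b ∈ Finset.range (2*n+3), lab n k l ((j:ℕ)+1) b)
            - lab n k l ((j:ℕ)+1) ((j:ℕ)+1)) * Yv n x ((j:ℕ)+1) := by
    show (∑ i, Atilde n k l j i * x i) = _
    rw [Finset.sum_congr rfl (fun i _ => step1 i), Finset.sum_add_distrib,
      Finset.sum_ite_eq' Finset.univ j
        (fun _ => (-(∑ b ∈ Finset.range (2*n+3), lab n k l ((j:ℕ)+1) b)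
          - lab n k l ((j:ℕ)+1) ((j:ℕ)+1)) * Yv n x ((j:ℕ)+1)),
      if_pos (Finset.mem_univ j),
      ← Fin.sum_univ_eq_sum_range (fun i => lab n k l (i+1) ((j:ℕ)+1) * Yv n x (i+1))]
  rw [hsum, in_eq hn ((j:ℕ)+1) (by omega) (by omega),
    out_eq hn ((j:ℕ)+1) (by omega) (by omega),
    lab_eq_zero ((j:ℕ)+1) ((j:ℕ)+1) (by omega) (by omega) (by omega)]
  rcases Nat.lt_or_ge (j:ℕ) 1 with hc | hc
  · -- j = 0, m = 1
    have hj0 : (j:ℕ) = 0 := by omega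
    rw [hj0]
    norm_num
    rw [lab_eq_zero 0 1 (by omega) (by omega) (by omega),
      lab_eq_zero 1 0 (by omega) (by omega) (by omega)]
    unfold flux
    rw [if_pos (Or.inl rfl), if_neg (by omega)]
    ring
  · rcases Nat.lt_or_ge (j:ℕ) (2*n+1) with hc2 | hc2
    · -- middle: 1 ≤ j ≤ 2n, m = j+1 ∈ [2, 2n+1]
      rw [if_neg (by omega : ¬ (j:ℕ)+1 = 1), if_neg (by omega : ¬ (j:ℕ)+1 = 2*n+2),
        show (j:ℕ)+1-2+1 = (j:ℕ) by omega, show (j:ℕ)+1-1 = (j:ℕ) by omega]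
      unfold flux
      rw [if_neg (by omega), if_neg (by omega)]
      ring
    · -- j = 2n+1, m = 2n+2
      have hj1 : (j:ℕ) = 2*n+1 := by omega
      rw [hj1]
      rw [if_neg (by omega : ¬ 2*n+1+1 = 1), if_pos (by omega : 2*n+1+1 = 2*n+2),
        show 2*n+1+1-2+1 = 2*n+1 by omega, show 2*n+1+1-1 = 2*n+1 by omega,
        lab_eq_zero (2*n+1+1+1) (2*n+1+1) (by omega) (by omega) (by omega),
        lab_eq_zero (2*n+1+1) (2*n+1+1+1) (by omega) (by omega) (by omega)]
      unfold flux
      rw [if_neg (by omega), if_pos (by omega : 2*n+1+1 = 0 ∨ 2*n+1+1 = 2*n+2),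
        show 2*n+1+1 = 2*n+2 by omega]
      ring

lemma flux_rho (hn : 1 ≤ n) (hk : ∀ i, 1 ≤ i → i ≤ 2*n+1 → 0 < k i)
    (hl : ∀ i, 1 ≤ i → i ≤ 2*n+1 → 0 < l i) :
    ∀ m, m ≤ 2*n+2 → flux n k l (rhoV n k l) m = 1 := by
  intro m hm
  have hl1 : l 1 ≠ 0 := ne_of_gt (hl 1 le_rfl (by omega))
  unfold flux
  split_ifs with h
  · rw [Yv_rho (2*n+2) (by omega) (by omega), show 2*n+2-(2*n+2) = 0 by omega,
      lab_wrap hn]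
    show l 1 * (1 / l 1) = 1
    field_simp
  · have h1 : 1 ≤ m := by omega
    have h2 : m ≤ 2*n+1 := by omega
    rw [Yv_rho m (by omega) (by omega), Yv_rho (m+1) (by omega) (by omega),
      show 2*n+2-m = (2*n+1-m)+1 by omega]
    rw [rhoAux, show 2*n+1-(2*n+1-m) = m by omega, show 2*n+2-(2*n+1-m) = m+1 by omega,
      show 2*n+2-(m+1) = 2*n+1-m by omega]
    have hf : lab n k l m (m+1) ≠ 0 := ne_of_gt (lab_f_pos hk hl m h1 h2)
    rw [mul_comm, div_mul_cancel₀ _ hf]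
    ring

lemma rho_in_ker (hn : 1 ≤ n) (hk : ∀ i, 1 ≤ i → i ≤ 2*n+1 → 0 < k i)
    (hl : ∀ i, 1 ≤ i → i ≤ 2*n+1 → 0 < l i) :
    (Atilde n k l).mulVec (rhoV n k l) = 0 := by
  funext j
  rw [row_eq_s5 hn, flux_rho hn hk hl _ (by omega), flux_rho hn hk hl _ (by omega)]
  simp

lemma ker_sub (hn : 1 ≤ n) (hk : ∀ i, 1 ≤ i → i ≤ 2*n+1 → 0 < k i)
    (hl : ∀ i, 1 ≤ i → i ≤ 2*n+1 → 0 < l i) (x : Fin (2*n+2) → ℝ)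
    (hx : (Atilde n k l).mulVec x = 0) :
    x = (flux n k l x 0) • rhoV n k l := by
  have hl1 : l 1 ≠ 0 := ne_of_gt (hl 1 le_rfl (by omega))
  set c := flux n k l x 0 with hc
  have hconst : ∀ m, m ≤ 2*n+2 → flux n k l x m = c := by
    intro m
    induction m with
    | zero => intro _; rfl
    | succ p ih =>
      intro hp
      have hrow := row_eq_s5 (k := k) (l := l) hn x ⟨p, by omega⟩
      rw [hx] at hrow
      have : flux n k l x p - flux n k l x (p+1) = 0 := by
        rw [← hrow]; rfl
      have hihp := ih (by omega)
      show flux n k l x (p+1) = c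
      linarith
  have hY : ∀ t, t ≤ 2*n+1 → Yv n x (2*n+2-t) = c * rhoAux n k l t := by
    intro t
    induction t with
    | zero =>
      intro _
      have h0 : flux n k l x (2*n+2) = c := hconst (2*n+2) le_rfl
      unfold flux at h0
      rw [if_pos (Or.inr rfl), lab_wrap hn] at h0
      rw [show (2*n+2)-0 = 2*n+2 by omega, rhoAux]
      field_simp
      linarith
    | succ p ih =>
      intro hp
      have hm1 : 1 ≤ 2*n+1-p := by omega
      have hm2 : 2*n+1-p ≤ 2*n+1 := by omega
      have h0 : flux n k l x (2*n+1-p) = c := hconst _ (by omega)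
      unfold flux at h0
      rw [if_neg (by omega)] at h0
      have hihp := ih (by omega)
      rw [show (2*n+1-p)+1 = 2*n+2-p by omega, hihp] at h0
      rw [show 2*n+2-(p+1) = 2*n+1-p by omega, rhoAux]
      have hf : lab n k l (2*n+1-p) (2*n+2-p) ≠ 0 := by
        rw [show 2*n+2-p = (2*n+1-p)+1 by omega]
        exact ne_of_gt (lab_f_pos hk hl _ hm1 hm2)
      rw [mul_div_assoc', eq_div_iff hf]
      rw [show 2*n+2-p = (2*n+1-p)+1 by omega] at h0 ⊢
      ring_nf
      ring_nf at h0
      linarith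
  funext j
  have hj : (j:ℕ) < 2*n+2 := j.isLt
  have ht : 2*n+1-(j:ℕ) ≤ 2*n+1 := by omega
  have := hY (2*n+1-(j:ℕ)) ht
  rw [show 2*n+2-(2*n+1-(j:ℕ)) = (j:ℕ)+1 by omega, Yv_eq] at this
  rw [this]
  rfl

/-- The matrix `Ã_κᵗ` has rank `2n+1`, and its kernel is spanned by a vector with all
coordinates strictly positive. -/
theorem Atilde_rank_and_positive_kernel (n : ℕ) (hn : 1 ≤ n) (k l : ℕ → ℝ)
    (hk : ∀ i, 1 ≤ i → i ≤ 2*n+1 → 0 < k i)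
    (hl : ∀ i, 1 ≤ i → i ≤ 2*n+1 → 0 < l i) :
    (Atilde n k l).rank = 2*n+1 ∧
    ∃ ρ : Fin (2*n+2) → ℝ, (∀ i, 0 < ρ i) ∧
      LinearMap.ker (Matrix.mulVecLin (Atilde n k l)) = Submodule.span ℝ {ρ} := by
  have hrho_pos : ∀ i : Fin (2*n+2), 0 < rhoV n k l i := fun i =>
    rhoAux_pos hk hl _ (by omega)
  have hne : rhoV n k l ≠ 0 := by
    intro h
    have h0 := hrho_pos ⟨0, by omega⟩
    rw [h] at h0
    exact lt_irrefl 0 h0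
  have hker : LinearMap.ker (Matrix.mulVecLin (Atilde n k l))
      = Submodule.span ℝ {rhoV n k l} := by
    apply le_antisymm
    · intro x hx
      rw [LinearMap.mem_ker, Matrix.mulVecLin_apply] at hx
      rw [Submodule.mem_span_singleton]
      exact ⟨flux n k l x 0, (ker_sub hn hk hl x hx).symm⟩
    · rw [Submodule.span_singleton_le_iff_mem, LinearMap.mem_ker, Matrix.mulVecLin_apply]
      exact rho_in_ker hn hk hl
  constructor
  · have h1 := LinearMap.finrank_range_add_finrank_ker (Matrix.mulVecLin (Atilde n k l))
    rw [hker, finrank_span_singleton hne, Module.finrank_fin_fun] at h1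
    have h2 : (Atilde n k l).rank
        = Module.finrank ℝ (LinearMap.range (Matrix.mulVecLin (Atilde n k l))) := rfl
    omega
  · exact ⟨rhoV n k l, hrho_pos, hker⟩

end
end
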